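/- arXiv:2405.09309 — 3 statements merged into one kernel-verified Lean document; each statement's English description precedes it below -/
import Mathlib

section
/- Fix an integer q ≥ 2. For every sequence (ε_n) of positive reals with ε_n → 0 as n → ∞, there exists a sequence of (n, M_n) ID codes for the q-ary uniform permutation channel with M_n ≥ 2^{ε_n · n^{q−1}} messages, type-I error λ_{1,n} = 0 for every n, and type-II errors λ_{2,n} → 0 as n → ∞. -/
open Finset

/-- The type class of `x`: all vectors obtained from `x` by permuting its coordinates. -/
def typeClass (q n : ℕ) (x : Fin n → Fin q) : Finset (Fin n → Fin q) :=
  Finset.univ.filter fun y => ∃ σ : Equiv.Perm (Fin n), y = fun k => x (σ k)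

/-- `Q` is a probability mass function on a finite type. -/
def IsPMF {α : Type*} [Fintype α] (Q : α → ℝ) : Prop :=
  (∀ a, 0 ≤ Q a) ∧ ∑ a, Q a = 1

/-- False-acceptance probability `λ_{i→j}` of an `(n, M)` ID code for the `q`-ary
uniform permutation channel. -/
noncomputable def lamFA (q n : ℕ) {M : ℕ} (Q : Fin M → (Fin n → Fin q) → ℝ)
    (D : Fin M → Finset (Fin n → Fin q)) (i j : Fin M) : ℝ :=
  ∑ x, Q i x * (((typeClass q n x ∩ D j).card : ℝ) / ((typeClass q n x).card : ℝ))

/-- Missed-detection probability `λ_{i↛i}` of an `(n, M)` ID code for the `q`-ary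
uniform permutation channel. -/
noncomputable def lamMD (q n : ℕ) {M : ℕ} (Q : Fin M → (Fin n → Fin q) → ℝ)
    (D : Fin M → Finset (Fin n → Fin q)) (i : Fin M) : ℝ :=
  ∑ x, Q i x * (((typeClass q n x \ D i).card : ℝ) / ((typeClass q n x).card : ℝ))


section Aux
open Finset Filter

/-! ### counts and type classes -/

/-- count of value `v` among coordinates of `x` -/
def cnt {q n : ℕ} (x : Fin n → Fin q) (v : Fin q) : ℕ :=
  (Finset.univ.filter fun k => x k = v).card

lemma mem_typeClass_self {q n : ℕ} (x : Fin n → Fin q) : x ∈ typeClass q n x := by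
  simp only [typeClass, mem_filter, mem_univ, true_and]
  exact ⟨Equiv.refl _, rfl⟩

lemma typeClass_card_pos {q n : ℕ} (x : Fin n → Fin q) : 0 < (typeClass q n x).card :=
  Finset.card_pos.mpr ⟨x, mem_typeClass_self x⟩

lemma cnt_eq_of_mem_typeClass {q n : ℕ} {x y : Fin n → Fin q}
    (hy : y ∈ typeClass q n x) : cnt y = cnt x := by
  simp only [typeClass, mem_filter, mem_univ, true_and] at hy
  obtain ⟨σ, rfl⟩ := hy
  funext v
  exact Finset.card_bij (fun k _ => σ k)
    (by intro k hk; simp only [mem_filter, mem_univ, true_and] at hk ⊢; exact hk)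
    (by intro a _ b _ h; exact σ.injective h)
    (by intro b hb; simp only [mem_filter, mem_univ, true_and] at hb ⊢
        exact ⟨σ.symm b, by simpa using hb, σ.apply_symm_apply b⟩)

/-! ### base-`B` digits -/

def digit (B j u : ℕ) : ℕ := u / B^j % B

lemma digit_inj (B : ℕ) :
    ∀ t u v, u < B^t → v < B^t → (∀ j < t, digit B j u = digit B j v) → u = v := by
  intro t
  induction t with
  | zero => intro u v hu hv _; simp at hu hv; omega
  | succ t ih =>
    intro u v hu hv h
    have h0 : u % B = v % B := by simpa [digit] using h 0 (Nat.succ_pos t)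
    have hd : u / B = v / B := by
      refine ih (u / B) (v / B) ?_ ?_ ?_
      · exact Nat.div_lt_of_lt_mul (by rwa [← pow_succ'] )
      · exact Nat.div_lt_of_lt_mul (by rwa [← pow_succ'] )
      · intro j hj
        have := h (j+1) (by omega)
        simpa [digit, Nat.div_div_eq_div_mul, pow_succ'] using this
    have e1 : B * (u/B) + u % B = u := Nat.div_add_mod u B
    have e2 : B * (v/B) + v % B = v := Nat.div_add_mod v B
    rw [hd] at e1
    omega

lemma card_interval (n a d : ℕ) (h : a + d ≤ n) :
    ((Finset.univ : Finset (Fin n)).filter fun k => a ≤ k.val ∧ k.val < a + d).card = d := by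
  have : ((Finset.univ : Finset (Fin n)).filter fun k => a ≤ k.val ∧ k.val < a + d).card
      = (Finset.Ico a (a+d)).card := by
    refine Finset.card_bij' (fun k _ => k.val) (fun t ht => ⟨t, ?_⟩) ?_ ?_ ?_ ?_
    · exact lt_of_lt_of_le (Finset.mem_Ico.mp ht).2 h
    · intro k hk; simp only [mem_filter, mem_univ, true_and] at hk; exact Finset.mem_Ico.mpr hk
    · intro t ht; simp only [mem_filter, mem_univ, true_and]; exact Finset.mem_Ico.mp ht
    · intro k hk; rfl
    · intro t ht; rfl
  rw [this, Nat.card_Ico]; omega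

/-! ### representative vectors -/

/-- representative vector with `digit (m+1) j u` coordinates equal to `j+1` -/
def repv (q n m q' : ℕ) (hq : q' < q) (u : ℕ) : Fin n → Fin q := fun k =>
  if h : k.val / m < q' ∧ k.val % m < digit (m+1) (k.val / m) u
  then ⟨k.val / m + 1, by omega⟩
  else ⟨0, by omega⟩

lemma cnt_repv (q n m q' : ℕ) (hq : q' < q) (hm : 0 < m) (hn : q' * m ≤ n)
    (u : ℕ) (j : ℕ) (hj : j < q') :
    cnt (repv q n m q' hq u) ⟨j+1, by omega⟩ = digit (m+1) j u := by
  set d := digit (m+1) j u with hd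
  have hdm : d < m + 1 := Nat.mod_lt _ (by omega)
  have key : ∀ k : Fin n, (repv q n m q' hq u k = ⟨j+1, by omega⟩)
      ↔ (j*m ≤ k.val ∧ k.val < j*m + d) := by
    intro k
    have h1 : m * (k.val / m) + k.val % m = k.val := Nat.div_add_mod k.val m
    have hr : k.val % m < m := Nat.mod_lt _ hm
    constructor
    · intro he
      unfold repv at he
      split at he
      · next hc =>
        have hv : k.val / m + 1 = j + 1 := congrArg Fin.val he
        have haj : k.val / m = j := by omega
        have hrd : k.val % m < d := by rw [hd, ← haj]; exact hc.2
        rw [haj] at h1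
        constructor
        · calc j*m = m*j := by ring
            _ ≤ k.val := by omega
        · calc k.val = m*j + k.val % m := h1.symm
            _ < m*j + d := by omega
            _ = j*m + d := by ring
      · next hc =>
        exfalso
        have : (0:ℕ) = j + 1 := congrArg Fin.val he
        omega
    · intro ⟨hk1, hk2⟩
      have hk3 : k.val < (j+1)*m := by
        calc k.val < j*m + d := hk2
          _ ≤ j*m + m := by omega
          _ = (j+1)*m := by ring
      have haj : k.val / m = j := Nat.div_eq_of_lt_le hk1 hk3
      have hrd : k.val % m < d := by
        rw [haj] at h1
        have : j*m = m*j := by ring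
        omega
      have hc : k.val / m < q' ∧ k.val % m < digit (m+1) (k.val/m) u := by
        rw [haj]; exact ⟨hj, by rw [← hd]; exact hrd⟩
      unfold repv
      rw [dif_pos hc]
      apply Fin.ext
      simp only [haj]
  have : (Finset.univ.filter fun k : Fin n => repv q n m q' hq u k = ⟨j+1, by omega⟩)
      = (Finset.univ.filter fun k : Fin n => j*m ≤ k.val ∧ k.val < j*m + d) := by
    apply Finset.filter_congr; intro k _; simp [key k]
  rw [cnt, this, card_interval]
  calc j*m + d ≤ j*m + m := by omega
    _ = (j+1)*m := by ring
    _ ≤ q' * m := Nat.mul_le_mul_right m (by omega)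
    _ ≤ n := hn

lemma repv_inj (q n m q' : ℕ) (hq : q' < q) (hm : 0 < m) (hn : q' * m ≤ n)
    {u v : ℕ} (hu : u < (m+1)^q') (hv : v < (m+1)^q')
    (h : cnt (repv q n m q' hq u) = cnt (repv q n m q' hq v)) : u = v := by
  refine digit_inj (m+1) q' u v hu hv ?_
  intro j hj
  rw [← cnt_repv q n m q' hq hm hn u j hj, ← cnt_repv q n m q' hq hm hn v j hj, h]

/-! ### counting functions with large agreement, and a greedy family -/

lemma agree_count_bound (K L s : ℕ) (g : Fin K → Fin L) :
    ((Finset.univ : Finset (Fin K → Fin L)).filter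
      fun f => s ≤ (Finset.univ.filter fun a => f a = g a).card).card
      ≤ Nat.choose K s * L^(K - s) := by
  classical
  have hsub : ((Finset.univ : Finset (Fin K → Fin L)).filter
      fun f => s ≤ (Finset.univ.filter fun a => f a = g a).card)
      ⊆ (Finset.powersetCard s (Finset.univ : Finset (Fin K))).biUnion
        (fun A => Finset.univ.filter fun f => ∀ a ∈ A, f a = g a) := by
    intro f hf
    simp only [mem_filter, mem_univ, true_and] at hf
    obtain ⟨A, hA, hcard⟩ := Finset.exists_subset_card_eq hf
    refine Finset.mem_biUnion.mpr ⟨A, ?_, ?_⟩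
    · exact Finset.mem_powersetCard.mpr ⟨Finset.subset_univ _, hcard⟩
    · simp only [mem_filter, mem_univ, true_and]
      intro a ha
      have := hA ha
      simp only [mem_filter, mem_univ, true_and] at this
      exact this
  calc _ ≤ _ := Finset.card_le_card hsub
    _ ≤ ∑ A ∈ Finset.powersetCard s (Finset.univ : Finset (Fin K)),
        (Finset.univ.filter fun f : Fin K → Fin L => ∀ a ∈ A, f a = g a).card :=
        Finset.card_biUnion_le
    _ ≤ ∑ _A ∈ Finset.powersetCard s (Finset.univ : Finset (Fin K)), L^(K-s) := by
        apply Finset.sum_le_sum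
        intro A hA
        obtain ⟨-, hAcard⟩ := Finset.mem_powersetCard.mp hA
        have hinj : ((Finset.univ : Finset (Fin K → Fin L)).filter
            fun f => ∀ a ∈ A, f a = g a).card
            ≤ (Finset.univ : Finset ((↥(Finset.univ \ A)) → Fin L)).card := by
          apply Finset.card_le_card_of_injOn (fun f => fun a => f a.val)
          · intro f _; exact Finset.mem_univ _
          · intro f1 h1 f2 h2 he
            simp only [Finset.coe_filter, Set.mem_setOf_eq, mem_univ, true_and] at h1 h2
            funext a
            by_cases ha : a ∈ A
            · rw [h1 a ha, h2 a ha]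
            · have : a ∈ Finset.univ \ A := Finset.mem_sdiff.mpr ⟨Finset.mem_univ _, ha⟩
              exact congrFun he ⟨a, this⟩
        calc _ ≤ _ := hinj
          _ = L^(K-s) := by
            rw [Finset.card_univ, Fintype.card_fun]
            congr 1
            · exact Fintype.card_fin L
            · rw [Fintype.card_coe, Finset.card_sdiff_of_subset (Finset.subset_univ _),
                Finset.card_univ, Fintype.card_fin, hAcard]
    _ = Nat.choose K s * L^(K-s) := by
        rw [Finset.sum_const, Finset.card_powersetCard, Finset.card_univ, Fintype.card_fin,
          smul_eq_mul]

lemma exists_family (K L s W M : ℕ)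
    (hW : ∀ g : Fin K → Fin L, ((Finset.univ : Finset (Fin K → Fin L)).filter
      fun f => s ≤ (Finset.univ.filter fun a => f a = g a).card).card ≤ W)
    (hM : M * W < L ^ K) :
    ∃ F : Fin M → (Fin K → Fin L), ∀ i j, i ≠ j →
      (Finset.univ.filter fun a => F i a = F j a).card < s := by
  classical
  induction M with
  | zero => exact ⟨Fin.elim0, fun i => i.elim0⟩
  | succ M ih =>
    obtain ⟨F, hF⟩ := ih (lt_of_le_of_lt (Nat.mul_le_mul_right W (Nat.le_succ M)) hM)
    set Bad := (Finset.univ : Finset (Fin M)).biUnion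
      (fun i => (Finset.univ : Finset (Fin K → Fin L)).filter
        fun f => s ≤ (Finset.univ.filter fun a => f a = F i a).card) with hBad
    have hBadcard : Bad.card < L ^ K := by
      calc Bad.card ≤ ∑ i : Fin M, ((Finset.univ : Finset (Fin K → Fin L)).filter
            fun f => s ≤ (Finset.univ.filter fun a => f a = F i a).card).card :=
            Finset.card_biUnion_le
        _ ≤ ∑ _i : Fin M, W := Finset.sum_le_sum (fun i _ => hW (F i))
        _ = M * W := by rw [Finset.sum_const, Finset.card_univ, Fintype.card_fin, smul_eq_mul]
        _ < L ^ K := lt_of_le_of_lt (Nat.mul_le_mul_right W (Nat.le_succ M)) hM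
    have hne : Bad ≠ Finset.univ := by
      intro h
      rw [h, Finset.card_univ, Fintype.card_fun, Fintype.card_fin, Fintype.card_fin] at hBadcard
      omega
    obtain ⟨g, hg⟩ : ∃ g, g ∉ Bad := by
      by_contra hc
      push_neg at hc
      exact hne (Finset.eq_univ_iff_forall.mpr hc)
    have hgood : ∀ i : Fin M, (Finset.univ.filter fun a => g a = F i a).card < s := by
      intro i
      by_contra hc
      push_neg at hc
      exact hg (Finset.mem_biUnion.mpr ⟨i, Finset.mem_univ _,
        by simp only [mem_filter, mem_univ, true_and]; exact hc⟩)
    refine ⟨Fin.snoc F g, ?_⟩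
    intro i j hij
    have hsymm : ∀ f1 f2 : Fin K → Fin L,
        (Finset.univ.filter fun a => f1 a = f2 a).card
        = (Finset.univ.filter fun a => f2 a = f1 a).card := by
      intro f1 f2; congr 1; apply Finset.filter_congr; intro a _; simp [eq_comm]
    rcases Fin.eq_castSucc_or_eq_last i with ⟨i', rfl⟩ | rfl <;>
      rcases Fin.eq_castSucc_or_eq_last j with ⟨j', rfl⟩ | rfl
    · simp only [Fin.snoc_castSucc]
      exact hF i' j' (fun h => hij (by rw [h]))
    · simp only [Fin.snoc_last, Fin.snoc_castSucc]
      rw [hsymm]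
      exact hgood i'
    · simp only [Fin.snoc_last, Fin.snoc_castSucc]
      exact hgood j'
    · exact absurd rfl hij

end Aux


section GoodCode
open Finset Filter

lemma good_code (q n : ℕ) (hq : 2 ≤ q) (E : ℝ) (hE : 0 ≤ E) (l M : ℕ) (hl : 1 ≤ l)
    (hMlow : (M:ℝ) < (2:ℝ) ^ (E+1))
    (hgood : (⌈(E+1) * (2:ℝ)^l⌉₊) * 2^l ≤ (n/(q-1)+1)^(q-1)) :
    ∃ (Q : Fin M → (Fin n → Fin q) → ℝ) (D : Fin M → Finset (Fin n → Fin q)),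
      (∀ i, IsPMF (Q i)) ∧ (∀ i, lamMD q n Q D i = 0) ∧
      (∀ i j, i ≠ j → lamFA q n Q D i j ≤ 2 / l) := by
  classical
  set q' := q - 1 with hq'def
  have hq'q : q' < q := by omega
  set m := n / q' with hmdef
  set L := 2^l with hLdef
  set K := ⌈(E+1) * (2:ℝ)^l⌉₊ with hKdef
  set T := (m+1)^q' with hTdef
  have hgood' : K * L ≤ T := hgood
  have h2l : (2:ℝ) ≤ (2:ℝ)^l := by
    calc (2:ℝ) = 2^1 := (pow_one 2).symm
      _ ≤ 2^l := pow_le_pow_right₀ (by norm_num) hl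
  have hL2 : 2 ≤ L := by
    calc (2:ℕ) = 2^1 := rfl
      _ ≤ 2^l := Nat.pow_le_pow_right (by omega) hl
  have hK2 : 2 ≤ K := by
    have h1 : (2:ℝ) ≤ (E+1) * 2^l := by nlinarith
    calc (2:ℕ) = ⌈(2:ℝ)⌉₊ := by simp
      _ ≤ K := Nat.ceil_le_ceil h1
  have hm1 : 1 ≤ m := by
    rcases Nat.eq_zero_or_pos m with h0 | h1
    · exfalso
      have hT1 : T = 1 := by rw [hTdef, h0, zero_add, one_pow]
      have h4 : 4 ≤ K * L := Nat.mul_le_mul hK2 hL2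
      omega
    · exact h1
  have hmn : q' * m ≤ n := by
    rw [hmdef, mul_comm]
    exact Nat.div_mul_le_self n q'
  set s := ⌈(E+1+(K:ℝ))/(l:ℝ)⌉₊ with hsdef
  have hl0 : (0:ℝ) < l := by exact_mod_cast hl
  have hK0 : (0:ℝ) < K := by exact_mod_cast (by omega : 0 < K)
  have hKE : E + 1 ≤ (K:ℝ) := by
    calc E + 1 ≤ (E+1) * 2^l := by nlinarith
      _ ≤ K := Nat.le_ceil _
  have hls : E + 1 + (K:ℝ) ≤ (l:ℝ) * s := by
    have := Nat.le_ceil ((E+1+(K:ℝ))/(l:ℝ))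
    rw [div_le_iff₀ hl0] at this
    calc E + 1 + (K:ℝ) ≤ (s:ℝ) * l := this
      _ = l * s := by ring
  -- greedy family condition
  have hfam : M * (Nat.choose K s * L^(K-s)) < L ^ K := by
    by_cases hsK : s ≤ K
    · have hC : (Nat.choose K s : ℝ) ≤ 2^K := by
        have : Nat.choose K s ≤ 2^K := by
          calc Nat.choose K s ≤ ∑ j ∈ Finset.range (K+1), Nat.choose K j :=
                Finset.single_le_sum (f := fun j => Nat.choose K j)
                  (fun j _ => Nat.zero_le _) (Finset.mem_range.mpr (by omega))
            _ = 2^K := Nat.sum_range_choose K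
        exact_mod_cast this
      have hCpos : (0:ℝ) < (Nat.choose K s : ℝ) * (L:ℝ)^(K-s) :=
        mul_pos (by exact_mod_cast Nat.choose_pos hsK)
          (pow_pos (by exact_mod_cast (by omega : 0 < L)) (K-s))
      have hreal : (M:ℝ) * ((Nat.choose K s : ℝ) * (L:ℝ)^(K-s)) < ((L:ℝ))^K := by
        have step1 : (M:ℝ) * ((Nat.choose K s : ℝ) * (L:ℝ)^(K-s))
            < (2:ℝ)^(E+1) * ((Nat.choose K s : ℝ) * (L:ℝ)^(K-s)) :=
          mul_lt_mul_of_pos_right hMlow hCpos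
        have hLcast : (L:ℝ) = 2^l := by rw [hLdef]; push_cast; ring
        have step2 : (2:ℝ)^(E+1) * ((Nat.choose K s : ℝ) * (L:ℝ)^(K-s))
            ≤ (2:ℝ)^(E+1) * ((2:ℝ)^K * (2:ℝ)^(l*(K-s))) := by
          apply mul_le_mul_of_nonneg_left _ (Real.rpow_nonneg (by norm_num) _)
          apply mul_le_mul hC _ (pow_nonneg (Nat.cast_nonneg L) _) (pow_nonneg (by norm_num) _)
          rw [hLcast, ← pow_mul]
        have step3 : (2:ℝ)^(E+1) * ((2:ℝ)^K * (2:ℝ)^(l*(K-s))) ≤ (2:ℝ)^(l*K : ℕ) := by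
          rw [show ((2:ℝ)^(K:ℕ) : ℝ) = (2:ℝ)^((K:ℕ):ℝ) from (Real.rpow_natCast 2 K).symm,
            show ((2:ℝ)^(l*(K-s) : ℕ) : ℝ) = (2:ℝ)^((l*(K-s) : ℕ):ℝ) from
              (Real.rpow_natCast 2 _).symm,
            show ((2:ℝ)^(l*K : ℕ) : ℝ) = (2:ℝ)^((l*K : ℕ):ℝ) from (Real.rpow_natCast 2 _).symm,
            ← Real.rpow_add (by norm_num), ← Real.rpow_add (by norm_num)]
          apply Real.rpow_le_rpow_of_exponent_le (by norm_num)
          have hcast : ((l*(K-s) : ℕ):ℝ) = (l:ℝ)*(K:ℝ) - (l:ℝ)*(s:ℝ) := by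
            push_cast [Nat.cast_sub hsK]
            ring
          have hcast2 : ((l*K : ℕ):ℝ) = (l:ℝ)*(K:ℝ) := by push_cast; ring
          rw [hcast, hcast2]
          linarith [hls]
        have hLK : ((L:ℝ))^K = (2:ℝ)^(l*K : ℕ) := by rw [hLcast, ← pow_mul]
        linarith [step1, step2, step3, hLK.ge, hLK.le]
      exact_mod_cast hreal
    · push_neg at hsK
      rw [Nat.choose_eq_zero_of_lt hsK]
      simp only [Nat.zero_mul, Nat.mul_zero, zero_mul, mul_zero]
      exact pow_pos (by omega) K
  obtain ⟨F, hF⟩ := exists_family K L s _ M (fun g => agree_count_bound K L s g) hfam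
  -- encoding into representative vectors
  have hencT : ∀ (a : Fin K) (b : Fin L), a.val * L + b.val < T := by
    intro a b
    calc a.val * L + b.val < a.val * L + L := by omega
      _ = (a.val + 1) * L := by ring
      _ ≤ K * L := Nat.mul_le_mul_right L a.isLt
      _ ≤ T := hgood'
  have hencInj : ∀ (a : Fin K) (b : Fin L) (a' : Fin K) (b' : Fin L),
      a.val * L + b.val = a'.val * L + b'.val → a = a' ∧ b = b' := by
    intro a b a' b' h
    have hL0 : 0 < L := by omega
    have e1 : (a.val * L + b.val) / L = a.val := by
      rw [mul_comm, Nat.mul_add_div hL0, Nat.div_eq_of_lt b.isLt, Nat.add_zero]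
    have e2 : (a'.val * L + b'.val) / L = a'.val := by
      rw [mul_comm, Nat.mul_add_div hL0, Nat.div_eq_of_lt b'.isLt, Nat.add_zero]
    have ha : a.val = a'.val := by rw [← e1, ← e2, h]
    refine ⟨Fin.ext ha, Fin.ext ?_⟩
    have := h
    rw [ha] at this
    omega
  set rep : ℕ → (Fin n → Fin q) := repv q n m q' hq'q with hrepdef
  set repOf : Fin M → Fin K → (Fin n → Fin q) :=
    fun i a => rep (a.val * L + (F i a).val) with hrepOfdef
  have hcross : ∀ i j a b, cnt (repOf i a) = cnt (repOf j b) → a = b ∧ F i a = F j b := by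
    intro i j a b h
    have := repv_inj q n m q' hq'q (by omega) hmn (hencT a (F i a)) (hencT b (F j b)) h
    exact hencInj a (F i a) b (F j b) this
  have hrepOfInj : ∀ i, Function.Injective (repOf i) := by
    intro i a a' h
    exact (hcross i i a a' (congrArg cnt h)).1
  set S : Fin M → Finset (Fin n → Fin q) := fun i => Finset.univ.image (repOf i) with hSdef
  have hScard : ∀ i, (S i).card = K := by
    intro i
    rw [hSdef]
    rw [Finset.card_image_of_injective _ (hrepOfInj i), Finset.card_univ, Fintype.card_fin]
  refine ⟨fun i x => if x ∈ S i then (K:ℝ)⁻¹ else 0,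
    fun i => Finset.univ.filter fun y => ∃ a, cnt y = cnt (repOf i a), ?_, ?_, ?_⟩
  · -- PMF
    intro i
    constructor
    · intro x
      dsimp only
      split
      · exact inv_nonneg.mpr hK0.le
      · exact le_refl 0
    · dsimp only
      rw [Finset.sum_ite_mem, Finset.univ_inter, Finset.sum_const, hScard i, nsmul_eq_mul]
      exact mul_inv_cancel₀ (ne_of_gt hK0)
  · -- lamMD = 0
    intro i
    rw [lamMD]
    apply Finset.sum_eq_zero
    intro x _
    by_cases hx : x ∈ S i
    · obtain ⟨a, -, rfl⟩ := Finset.mem_image.mp hx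
      have hsub : typeClass q n (repOf i a)
          ⊆ Finset.univ.filter fun y => ∃ b, cnt y = cnt (repOf i b) := by
        intro y hy
        exact Finset.mem_filter.mpr ⟨Finset.mem_univ _, ⟨a, by
          rw [cnt_eq_of_mem_typeClass hy]⟩⟩
      rw [Finset.sdiff_eq_empty_iff_subset.mpr hsub]
      simp
    · rw [if_neg hx, zero_mul]
  · -- lamFA bound
    intro i j hij
    have hld : (2:ℝ)/l = 2/l := rfl
    rw [lamFA]
    have hterm : ∀ x : Fin n → Fin q,
        (if x ∈ S i then (K:ℝ)⁻¹ else 0) *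
          (((typeClass q n x ∩ (Finset.univ.filter
              fun y => ∃ a, cnt y = cnt (repOf j a))).card : ℝ) / ((typeClass q n x).card : ℝ))
        = if x ∈ S i then (K:ℝ)⁻¹ *
          (((typeClass q n x ∩ (Finset.univ.filter
              fun y => ∃ a, cnt y = cnt (repOf j a))).card : ℝ) / ((typeClass q n x).card : ℝ))
          else 0 := by
      intro x
      split <;> simp
    calc (∑ x, (if x ∈ S i then (K:ℝ)⁻¹ else 0) *
          (((typeClass q n x ∩ (Finset.univ.filter
              fun y => ∃ a, cnt y = cnt (repOf j a))).card : ℝ) / ((typeClass q n x).card : ℝ)))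
        = ∑ x ∈ S i, (K:ℝ)⁻¹ *
          (((typeClass q n x ∩ (Finset.univ.filter
              fun y => ∃ a, cnt y = cnt (repOf j a))).card : ℝ) / ((typeClass q n x).card : ℝ)) := by
          rw [Finset.sum_congr rfl (fun x _ => hterm x), Finset.sum_ite_mem, Finset.univ_inter]
      _ = ∑ a : Fin K, (K:ℝ)⁻¹ *
          (((typeClass q n (repOf i a) ∩ (Finset.univ.filter
              fun y => ∃ b, cnt y = cnt (repOf j b))).card : ℝ)
            / ((typeClass q n (repOf i a)).card : ℝ)) := by
          rw [hSdef]
          rw [Finset.sum_image (fun a _ b _ h => hrepOfInj i h)]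
      _ ≤ ∑ a : Fin K, (K:ℝ)⁻¹ * (if F i a = F j a then (1:ℝ) else 0) := by
          apply Finset.sum_le_sum
          intro a _
          apply mul_le_mul_of_nonneg_left _ (inv_nonneg.mpr hK0.le)
          by_cases hag : F i a = F j a
          · rw [if_pos hag]
            apply div_le_one_of_le₀
            · exact_mod_cast Finset.card_le_card Finset.inter_subset_left
            · exact Nat.cast_nonneg _
          · rw [if_neg hag]
            have hempty : typeClass q n (repOf i a) ∩ (Finset.univ.filter
                fun y => ∃ b, cnt y = cnt (repOf j b)) = ∅ := by
              apply Finset.eq_empty_of_forall_notMem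
              intro y hy
              obtain ⟨hy1, hy2⟩ := Finset.mem_inter.mp hy
              obtain ⟨-, b, hb⟩ := Finset.mem_filter.mp hy2
              have : cnt (repOf i a) = cnt (repOf j b) := by
                rw [← cnt_eq_of_mem_typeClass hy1, hb]
              obtain ⟨rfl, he⟩ := hcross i j a b this
              exact hag he
            rw [hempty]
            simp
      _ = (K:ℝ)⁻¹ * ((Finset.univ.filter fun a => F i a = F j a).card : ℝ) := by
          rw [← Finset.mul_sum]
          congr 1
          rw [Finset.sum_boole]
      _ ≤ (K:ℝ)⁻¹ * ((s:ℝ) - 1) := by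
          apply mul_le_mul_of_nonneg_left _ (inv_nonneg.mpr hK0.le)
          have := hF i j hij
          have h1 : ((Finset.univ.filter fun a => F i a = F j a).card : ℝ) + 1 ≤ (s:ℝ) := by
            exact_mod_cast this
          linarith
      _ ≤ 2 / l := by
          have hEK0 : (0:ℝ) ≤ E+1+(K:ℝ) := by linarith
          have hsub : (s:ℝ) - 1 ≤ (E+1+(K:ℝ))/(l:ℝ) := by
            have := Nat.ceil_lt_add_one (div_nonneg hEK0 hl0.le)
            rw [← hsdef] at this
            linarith
          have h2K : E+1+(K:ℝ) ≤ 2*(K:ℝ) := by linarith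
          calc (K:ℝ)⁻¹ * ((s:ℝ) - 1) ≤ (K:ℝ)⁻¹ * ((E+1+(K:ℝ))/(l:ℝ)) :=
                mul_le_mul_of_nonneg_left hsub (inv_nonneg.mpr hK0.le)
            _ = (E+1+(K:ℝ))/((l:ℝ)*(K:ℝ)) := by rw [inv_mul_eq_div, div_div, mul_comm]
            _ ≤ 2 / l := by
                rw [div_le_div_iff₀ (mul_pos hl0 hK0) hl0]
                calc (E+1+(K:ℝ))*l ≤ (2*(K:ℝ))*l := mul_le_mul_of_nonneg_right h2K hl0.le
                  _ = 2*((l:ℝ)*(K:ℝ)) := by ring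

end GoodCode


section Params
open Filter

noncomputable def Epar (q : ℕ) (ε : ℕ → ℝ) (n : ℕ) : ℝ := ε n * (n:ℝ)^(q-1)

noncomputable def bpar (ε : ℕ → ℝ) (n : ℕ) : ℕ := Nat.log 2 (1 + ⌊1/ε n⌋₊)

noncomputable def lpar (ε : ℕ → ℝ) (n : ℕ) : ℕ :=
  max 1 (min (Nat.sqrt (bpar ε n)) (Nat.log 2 (Nat.sqrt (Nat.sqrt n))))

noncomputable def Mpar (q : ℕ) (ε : ℕ → ℝ) (n : ℕ) : ℕ := ⌈(2:ℝ)^(Epar q ε n)⌉₊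

noncomputable def goodn (q : ℕ) (ε : ℕ → ℝ) (n : ℕ) : Prop :=
  ⌈(Epar q ε n + 1) * (2:ℝ)^(lpar ε n)⌉₊ * 2^(lpar ε n) ≤ (n/(q-1)+1)^(q-1)

open Classical in
noncomputable def lam2par (q : ℕ) (ε : ℕ → ℝ) (n : ℕ) : ℝ :=
  if goodn q ε n then 2/(lpar ε n : ℝ) else 1

lemma tendsto_nat_sqrt_comp {u : ℕ → ℕ} (hu : Tendsto u atTop atTop) :
    Tendsto (fun n => Nat.sqrt (u n)) atTop atTop := by
  refine tendsto_atTop.mpr fun c => ?_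
  filter_upwards [hu.eventually (eventually_ge_atTop (c*c))] with n hn
  exact Nat.le_sqrt.mpr hn

lemma tendsto_nat_log_comp {u : ℕ → ℕ} (hu : Tendsto u atTop atTop) :
    Tendsto (fun n => Nat.log 2 (u n)) atTop atTop := by
  refine tendsto_atTop.mpr fun c => ?_
  filter_upwards [hu.eventually (eventually_ge_atTop (2^c))] with n hn
  have h1 : (1:ℕ) ≤ 2^c := Nat.one_le_two_pow
  exact (Nat.le_log_iff_pow_le (by norm_num) (by omega)).mpr hn

end Params

/-- Achievability (one-shot): for every `ε_n → 0` with `ε_n > 0` there is a sequence of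
`(n, M_n)` ID codes for the `q`-ary uniform permutation channel with
`M_n ≥ 2^(ε_n · n^(q-1))`, zero type-I error, and type-II error tending to `0`. -/
theorem oneShotAchievability (q : ℕ) (hq : 2 ≤ q)
    (ε : ℕ → ℝ) (hεpos : ∀ n, 0 < ε n)
    (hε : Filter.Tendsto ε Filter.atTop (nhds 0)) :
    ∃ (M : ℕ → ℕ) (Q : ∀ n, Fin (M n) → (Fin n → Fin q) → ℝ)
      (D : ∀ n, Fin (M n) → Finset (Fin n → Fin q)) (lam2 : ℕ → ℝ),
      (∀ n, (2 : ℝ) ^ (ε n * (n : ℝ) ^ (q - 1)) ≤ (M n : ℝ)) ∧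
      (∀ n i, IsPMF (Q n i)) ∧
      (∀ n i, lamMD q n (Q n) (D n) i = 0) ∧
      (∀ n i j, i ≠ j → lamFA q n (Q n) (D n) i j ≤ lam2 n) ∧
      Filter.Tendsto lam2 Filter.atTop (nhds 0) := by
  classical
  have hq1 : 1 ≤ q - 1 := by omega
  have hE0 : ∀ n, 0 ≤ Epar q ε n := fun n => mul_nonneg (hεpos n).le (by positivity)
  have hl1 : ∀ n, 1 ≤ lpar ε n := fun n => le_max_left 1 _
  -- `bpar` tends to infinity
  have hb_inf : Filter.Tendsto (bpar ε) Filter.atTop Filter.atTop := by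
    have heq : bpar ε = fun n => Nat.log 2 (1 + ⌊1/ε n⌋₊) := rfl
    rw [heq]
    apply tendsto_nat_log_comp
    have h1 : Filter.Tendsto (fun n => (ε n)⁻¹) Filter.atTop Filter.atTop := by
      apply Filter.Tendsto.inv_tendsto_nhdsGT_zero
      exact tendsto_nhdsWithin_iff.mpr
        ⟨hε, Filter.Eventually.of_forall (fun n => Set.mem_Ioi.mpr (hεpos n))⟩
    have h2 : Filter.Tendsto (fun n => ⌊(ε n)⁻¹⌋₊) Filter.atTop Filter.atTop :=
      tendsto_nat_floor_atTop.comp h1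
    refine Filter.tendsto_atTop.mpr fun c => ?_
    filter_upwards [h2.eventually (Filter.eventually_ge_atTop c)] with n hn
    simp only [one_div]
    omega
  have hlog2_inf : Filter.Tendsto (fun n => Nat.log 2 (Nat.sqrt (Nat.sqrt n)))
      Filter.atTop Filter.atTop :=
    tendsto_nat_log_comp (tendsto_nat_sqrt_comp (tendsto_nat_sqrt_comp Filter.tendsto_id))
  have hl_inf : Filter.Tendsto (lpar ε) Filter.atTop Filter.atTop := by
    refine Filter.tendsto_atTop.mpr fun c => ?_
    have ha := tendsto_nat_sqrt_comp hb_inf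
    filter_upwards [ha.eventually (Filter.eventually_ge_atTop c),
      hlog2_inf.eventually (Filter.eventually_ge_atTop c)] with n h1 h2
    calc c ≤ min (Nat.sqrt (bpar ε n)) (Nat.log 2 (Nat.sqrt (Nat.sqrt n))) := le_min h1 h2
      _ ≤ lpar ε n := le_max_right _ _
  -- Claim A : ε n * 4^(l n) → 0
  have hε1 : ∀ᶠ n in Filter.atTop, ε n < 1 := hε.eventually_lt_const (by norm_num)
  have hA : Filter.Tendsto (fun n => ε n * (4:ℝ)^(lpar ε n)) Filter.atTop (nhds 0) := by
    have hbound : ∀ᶠ n in Filter.atTop,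
        ε n * (4:ℝ)^(lpar ε n) ≤ 8 * (1/2:ℝ)^(Nat.sqrt (bpar ε n)) := by
      filter_upwards [hε1, hb_inf.eventually (Filter.eventually_ge_atTop 16)] with n hε1n hb16
      have h2b : (2:ℝ)^(bpar ε n) ≤ 2/ε n := by
        have h1 : (2:ℕ)^(bpar ε n) ≤ 1 + ⌊1/ε n⌋₊ := Nat.pow_log_le_self 2 (by omega)
        have h2 : ((⌊1/ε n⌋₊ : ℕ):ℝ) ≤ 1/ε n :=
          Nat.floor_le (le_of_lt (div_pos one_pos (hεpos n)))
        have h4 : (1:ℝ) ≤ 1/ε n := by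
          rw [le_div_iff₀ (hεpos n)]; linarith
        have h5 : (2:ℝ)/ε n = 1/ε n + 1/ε n := by ring
        calc (2:ℝ)^(bpar ε n) = (((2:ℕ)^(bpar ε n) : ℕ):ℝ) := by push_cast; ring
          _ ≤ ((1 + ⌊1/ε n⌋₊ : ℕ):ℝ) := by exact_mod_cast h1
          _ = 1 + ((⌊1/ε n⌋₊ : ℕ):ℝ) := by push_cast; ring
          _ ≤ 2/ε n := by rw [h5]; linarith
      have hεb : ε n ≤ 2 / 2^(bpar ε n) := by
        rw [le_div_iff₀ (by positivity : (0:ℝ) < (2:ℝ)^(bpar ε n))]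
        calc ε n * 2^(bpar ε n) ≤ ε n * (2/ε n) :=
              mul_le_mul_of_nonneg_left h2b (hεpos n).le
          _ = 2 := by rw [mul_comm, div_mul_cancel₀ _ (ne_of_gt (hεpos n))]
      have hlle : lpar ε n ≤ 1 + Nat.sqrt (bpar ε n) := by
        have h0 : lpar ε n ≤ max 1 (Nat.sqrt (bpar ε n)) :=
          max_le_max (le_refl 1) (min_le_left _ _)
        omega
      have hsb4 : 4 ≤ Nat.sqrt (bpar ε n) := Nat.le_sqrt.mpr (by omega)
      have hsq : Nat.sqrt (bpar ε n) * Nat.sqrt (bpar ε n) ≤ bpar ε n := by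
        have h := Nat.sqrt_le' (bpar ε n)
        rw [pow_two] at h
        exact h
      have h4l : (4:ℝ)^(lpar ε n) ≤ 4 * 2^(2*Nat.sqrt (bpar ε n)) := by
        calc (4:ℝ)^(lpar ε n) ≤ 4^(1+Nat.sqrt (bpar ε n)) :=
              pow_le_pow_right₀ (by norm_num) hlle
          _ = 4 * 4^(Nat.sqrt (bpar ε n)) := by rw [pow_add, pow_one]
          _ = 4 * 2^(2*Nat.sqrt (bpar ε n)) := by
              rw [show (4:ℝ) = 2^2 by norm_num, ← pow_mul]
      have hfrac : (2:ℝ)^(2*Nat.sqrt (bpar ε n)) / 2^(bpar ε n)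
          ≤ (1/2)^(Nat.sqrt (bpar ε n)) := by
        rw [one_div_pow, div_le_div_iff₀ (by positivity) (by positivity), one_mul,
          ← pow_add]
        apply pow_le_pow_right₀ (by norm_num)
        have h3s : 3 * Nat.sqrt (bpar ε n) ≤ bpar ε n := by
          calc 3 * Nat.sqrt (bpar ε n)
              ≤ Nat.sqrt (bpar ε n) * Nat.sqrt (bpar ε n) :=
                Nat.mul_le_mul_right _ (by omega)
            _ ≤ bpar ε n := hsq
        omega
      calc ε n * (4:ℝ)^(lpar ε n) ≤ (2/2^(bpar ε n)) * (4 * 2^(2*Nat.sqrt (bpar ε n))) := by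
            apply mul_le_mul hεb h4l (by positivity) (by positivity)
        _ = 8 * ((2:ℝ)^(2*Nat.sqrt (bpar ε n)) / 2^(bpar ε n)) := by ring
        _ ≤ 8 * (1/2)^(Nat.sqrt (bpar ε n)) := by
            apply mul_le_mul_of_nonneg_left hfrac (by norm_num)
    have hupper : Filter.Tendsto (fun n => 8 * (1/2:ℝ)^(Nat.sqrt (bpar ε n)))
        Filter.atTop (nhds 0) := by
      have h1 : Filter.Tendsto (fun k : ℕ => (1/2:ℝ)^k) Filter.atTop (nhds 0) :=
        tendsto_pow_atTop_nhds_zero_of_lt_one (by norm_num) (by norm_num)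
      have h2 := (h1.comp (tendsto_nat_sqrt_comp hb_inf)).const_mul (8:ℝ)
      simpa using h2
    refine tendsto_of_tendsto_of_tendsto_of_le_of_le' tendsto_const_nhds hupper ?_ hbound
    filter_upwards with n
    have := (hεpos n).le
    positivity
  -- eventually good
  have hcq : (0:ℝ) < ((q-1:ℕ):ℝ) := by exact_mod_cast (by omega : 0 < q-1)
  have hc0 : (0:ℝ) < ((q-1:ℕ):ℝ)^(q-1) := pow_pos hcq _
  have he1 : ∀ n : ℕ, (n:ℝ)^(q-1)/((q-1:ℕ):ℝ)^(q-1) ≤ (((n/(q-1) : ℕ):ℝ) + 1)^(q-1) := by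
    intro n
    have h1 := Nat.div_add_mod n (q-1)
    have h2 : n % (q-1) < q-1 := Nat.mod_lt n (by omega)
    have h3 : (q-1)*(n/(q-1)+1) = (q-1)*(n/(q-1)) + (q-1) := by ring
    have hnat : n ≤ (q-1) * (n/(q-1) + 1) := by omega
    have hreal : (n:ℝ) / ((q-1:ℕ):ℝ) ≤ ((n/(q-1) : ℕ) : ℝ) + 1 := by
      rw [div_le_iff₀ hcq]
      calc (n:ℝ) ≤ (((q-1) * (n/(q-1) + 1) : ℕ):ℝ) := by exact_mod_cast hnat
        _ = (((n/(q-1):ℕ):ℝ) + 1) * ((q-1:ℕ):ℝ) := by push_cast; ring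
    calc (n:ℝ)^(q-1)/((q-1:ℕ):ℝ)^(q-1) = ((n:ℝ)/((q-1:ℕ):ℝ))^(q-1) := by rw [div_pow]
      _ ≤ (((n/(q-1):ℕ):ℝ)+1)^(q-1) := pow_le_pow_left₀ (by positivity) hreal _
  have h4lsqrt : ∀ n : ℕ, 1 ≤ n → (4:ℕ)^(lpar ε n) ≤ 4 * Nat.sqrt n := by
    intro n hn
    have t1 : 1 ≤ Nat.sqrt n := Nat.le_sqrt.mpr (by omega)
    have hs1 : 1 ≤ Nat.sqrt (Nat.sqrt n) := Nat.le_sqrt.mpr (by omega)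
    have hlg : lpar ε n ≤ 1 + Nat.log 2 (Nat.sqrt (Nat.sqrt n)) := by
      have h0 : lpar ε n ≤ max 1 (Nat.log 2 (Nat.sqrt (Nat.sqrt n))) :=
        max_le_max (le_refl 1) (min_le_right _ _)
      omega
    have h2g : 2^(Nat.log 2 (Nat.sqrt (Nat.sqrt n))) ≤ Nat.sqrt (Nat.sqrt n) :=
      Nat.pow_log_le_self 2 (by omega)
    have hss : Nat.sqrt (Nat.sqrt n) * Nat.sqrt (Nat.sqrt n) ≤ Nat.sqrt n := by
      have h := Nat.sqrt_le' (Nat.sqrt n)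
      rw [pow_two] at h
      exact h
    calc (4:ℕ)^(lpar ε n) ≤ 4^(1+Nat.log 2 (Nat.sqrt (Nat.sqrt n))) :=
          Nat.pow_le_pow_right (by omega) hlg
      _ = 4 * (2^(Nat.log 2 (Nat.sqrt (Nat.sqrt n))) * 2^(Nat.log 2 (Nat.sqrt (Nat.sqrt n)))) := by
          rw [pow_add, pow_one, show (4:ℕ) = 2*2 from rfl, mul_pow]
      _ ≤ 4 * (Nat.sqrt (Nat.sqrt n) * Nat.sqrt (Nat.sqrt n)) :=
          Nat.mul_le_mul_left 4 (Nat.mul_le_mul h2g h2g)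
      _ ≤ 4 * Nat.sqrt n := Nat.mul_le_mul_left 4 hss
  have hsqrt_inf : Filter.Tendsto (fun n => Nat.sqrt n) Filter.atTop Filter.atTop :=
    tendsto_nat_sqrt_comp Filter.tendsto_id
  have hgoodev : ∀ᶠ n in Filter.atTop, goodn q ε n := by
    have hpart1 : ∀ᶠ n in Filter.atTop,
        ε n * (4:ℝ)^(lpar ε n) < 1/(2*((q-1:ℕ):ℝ)^(q-1)) :=
      hA.eventually_lt_const (by positivity)
    have hpart2 : ∀ᶠ n in Filter.atTop,
        (16*((q-1:ℕ):ℝ)^(q-1)) ≤ ((Nat.sqrt n : ℕ):ℝ) := by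
      have h : Filter.Tendsto (fun n => ((Nat.sqrt n : ℕ):ℝ)) Filter.atTop Filter.atTop :=
        tendsto_natCast_atTop_atTop.comp hsqrt_inf
      exact h.eventually (Filter.eventually_ge_atTop _)
    filter_upwards [hpart1, hpart2, Filter.eventually_ge_atTop 1] with n h1 h2 hn1
    show ⌈(Epar q ε n + 1) * (2:ℝ)^(lpar ε n)⌉₊ * 2^(lpar ε n) ≤ (n/(q-1)+1)^(q-1)
    rw [← Nat.cast_le (α := ℝ)]
    push_cast
    have h2l1 : (1:ℝ) ≤ 2^(lpar ε n) := by
      calc (1:ℝ) = 1^(lpar ε n) := (one_pow _).symm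
        _ ≤ 2^(lpar ε n) := pow_le_pow_left₀ (by norm_num) (by norm_num) _
    have hceil : ((⌈(Epar q ε n + 1) * (2:ℝ)^(lpar ε n)⌉₊ : ℕ):ℝ)
        ≤ (Epar q ε n + 2) * 2^(lpar ε n) := by
      have hcc := Nat.ceil_lt_add_one (a := (Epar q ε n + 1) * (2:ℝ)^(lpar ε n))
        (mul_nonneg (by linarith [hE0 n]) (by positivity : (0:ℝ) ≤ 2^(lpar ε n)))
      have hexp : (Epar q ε n + 2) * (2:ℝ)^(lpar ε n)
          = (Epar q ε n + 1)*2^(lpar ε n) + 2^(lpar ε n) := by ring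
      linarith
    have h44 : (2:ℝ)^(lpar ε n) * 2^(lpar ε n) = 4^(lpar ε n) := by
      rw [← mul_pow]; norm_num
    have hp1 : ε n * (4:ℝ)^(lpar ε n) * (n:ℝ)^(q-1)
        ≤ (n:ℝ)^(q-1)/(2*((q-1:ℕ):ℝ)^(q-1)) := by
      have hnn : (0:ℝ) ≤ (n:ℝ)^(q-1) := by positivity
      calc ε n * (4:ℝ)^(lpar ε n) * (n:ℝ)^(q-1)
          ≤ (1/(2*((q-1:ℕ):ℝ)^(q-1))) * (n:ℝ)^(q-1) :=
            mul_le_mul_of_nonneg_right h1.le hnn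
        _ = (n:ℝ)^(q-1)/(2*((q-1:ℕ):ℝ)^(q-1)) := by ring
    have hp2 : 2 * (4:ℝ)^(lpar ε n) ≤ (n:ℝ)^(q-1)/(2*((q-1:ℕ):ℝ)^(q-1)) := by
      have ha : (4:ℝ)^(lpar ε n) ≤ 4*((Nat.sqrt n : ℕ):ℝ) := by
        exact_mod_cast h4lsqrt n hn1
      have hsq2 : ((Nat.sqrt n : ℕ):ℝ) * ((Nat.sqrt n : ℕ):ℝ) ≤ (n:ℝ) := by
        have h := Nat.sqrt_le' n
        rw [pow_two] at h
        exact_mod_cast h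
      have hb2 : (16*((q-1:ℕ):ℝ)^(q-1))*((Nat.sqrt n : ℕ):ℝ) ≤ (n:ℝ)^(q-1) := by
        calc (16*((q-1:ℕ):ℝ)^(q-1))*((Nat.sqrt n : ℕ):ℝ)
            ≤ ((Nat.sqrt n : ℕ):ℝ)*((Nat.sqrt n : ℕ):ℝ) :=
              mul_le_mul_of_nonneg_right h2 (Nat.cast_nonneg _)
          _ ≤ (n:ℝ) := hsq2
          _ ≤ (n:ℝ)^(q-1) := by exact_mod_cast Nat.le_self_pow (by omega) n
      rw [le_div_iff₀ (by positivity : (0:ℝ) < 2*((q-1:ℕ):ℝ)^(q-1))]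
      calc 2*(4:ℝ)^(lpar ε n) * (2*((q-1:ℕ):ℝ)^(q-1))
          ≤ 2*(4*((Nat.sqrt n : ℕ):ℝ))*(2*((q-1:ℕ):ℝ)^(q-1)) := by
            apply mul_le_mul_of_nonneg_right _ (by positivity)
            linarith
        _ = (16*((q-1:ℕ):ℝ)^(q-1))*((Nat.sqrt n : ℕ):ℝ) := by ring
        _ ≤ (n:ℝ)^(q-1) := hb2
    have hsum : (n:ℝ)^(q-1)/(2*((q-1:ℕ):ℝ)^(q-1)) + (n:ℝ)^(q-1)/(2*((q-1:ℕ):ℝ)^(q-1))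
        = (n:ℝ)^(q-1)/((q-1:ℕ):ℝ)^(q-1) := by
      field_simp
      ring
    have hmain : (Epar q ε n + 2) * (2:ℝ)^(lpar ε n) * 2^(lpar ε n)
        ≤ ((n:ℝ)^(q-1))/((q-1:ℕ):ℝ)^(q-1) := by
      have hEexp : (Epar q ε n + 2) * (2:ℝ)^(lpar ε n) * 2^(lpar ε n)
          = ε n * 4^(lpar ε n) * (n:ℝ)^(q-1) + 2 * 4^(lpar ε n) := by
        rw [mul_assoc, h44, Epar]; ring
      rw [hEexp]
      linarith
    calc ((⌈(Epar q ε n + 1) * (2:ℝ)^(lpar ε n)⌉₊ : ℕ):ℝ) * 2^(lpar ε n)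
        ≤ (Epar q ε n + 2) * 2^(lpar ε n) * 2^(lpar ε n) :=
          mul_le_mul_of_nonneg_right hceil (by positivity)
      _ ≤ ((n:ℝ)^(q-1))/((q-1:ℕ):ℝ)^(q-1) := hmain
      _ ≤ (((n/(q-1):ℕ):ℝ) + 1)^(q-1) := he1 n
  -- the per-n codes
  have hex : ∀ n, ∃ (Q : Fin (Mpar q ε n) → (Fin n → Fin q) → ℝ)
      (D : Fin (Mpar q ε n) → Finset (Fin n → Fin q)),
      (∀ i, IsPMF (Q i)) ∧ (∀ i, lamMD q n Q D i = 0) ∧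
      (∀ i j, i ≠ j → lamFA q n Q D i j ≤ lam2par q ε n) := by
    intro n
    by_cases hg : goodn q ε n
    · have hMlow : ((Mpar q ε n : ℕ):ℝ) < (2:ℝ)^(Epar q ε n + 1) := by
        have h1 : ((Mpar q ε n : ℕ):ℝ) < (2:ℝ)^(Epar q ε n) + 1 := by
          rw [Mpar]
          exact Nat.ceil_lt_add_one (Real.rpow_nonneg (by norm_num) _)
        have h2 : (1:ℝ) ≤ (2:ℝ)^(Epar q ε n) := Real.one_le_rpow (by norm_num) (hE0 n)
        have h3 : (2:ℝ)^(Epar q ε n + 1) = (2:ℝ)^(Epar q ε n) * 2 := by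
          rw [Real.rpow_add (by norm_num), Real.rpow_one]
        linarith
      obtain ⟨Q, D, h1, h2, h3⟩ := good_code q n hq (Epar q ε n) (hE0 n) (lpar ε n)
        (Mpar q ε n) (hl1 n) hMlow hg
      refine ⟨Q, D, h1, h2, fun i j hij => ?_⟩
      have hl2 : lam2par q ε n = 2/(lpar ε n : ℝ) := by rw [lam2par, if_pos hg]
      rw [hl2]
      exact h3 i j hij
    · refine ⟨fun i x => if x = (fun _ => (⟨0, by omega⟩ : Fin q)) then 1 else 0,
        fun i => Finset.univ, ?_, ?_, ?_⟩
      · intro i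
        constructor
        · intro x
          dsimp only
          split <;> norm_num
        · dsimp only
          rw [Finset.sum_ite_eq' Finset.univ]
          simp
      · intro i
        rw [lamMD]
        apply Finset.sum_eq_zero
        intro x _
        rw [Finset.sdiff_eq_empty_iff_subset.mpr (Finset.subset_univ _)]
        simp
      · intro i j hij
        rw [lamFA]
        have hone : ∀ x : Fin n → Fin q,
            ((typeClass q n x ∩ Finset.univ).card : ℝ)/((typeClass q n x).card : ℝ) = 1 := by
          intro x
          rw [Finset.inter_univ]
          exact div_self (by exact_mod_cast (typeClass_card_pos x).ne')
        have hlam : lam2par q ε n = 1 := by rw [lam2par, if_neg hg]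
        rw [hlam]
        have hsum1 : (∑ x : Fin n → Fin q,
            (fun (_ : Fin (Mpar q ε n)) (x : Fin n → Fin q) =>
              if x = (fun _ => (⟨0, by omega⟩ : Fin q)) then (1:ℝ) else 0) i x *
            (((typeClass q n x ∩ Finset.univ).card : ℝ)/((typeClass q n x).card : ℝ))) = 1 := by
          dsimp only
          rw [Finset.sum_congr rfl (fun x _ => by rw [hone x, mul_one])]
          rw [Finset.sum_ite_eq' Finset.univ]
          simp
        exact le_of_eq hsum1
  choose Qf Df hprop using hex
  refine ⟨Mpar q ε, Qf, Df, lam2par q ε, ?_, fun n => (hprop n).1, fun n => (hprop n).2.1,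
    fun n => (hprop n).2.2, ?_⟩
  · intro n
    show (2:ℝ)^(ε n * (n:ℝ)^(q-1)) ≤ ((Mpar q ε n : ℕ):ℝ)
    rw [Mpar, Epar]
    exact Nat.le_ceil _
  · have h2l0 : Filter.Tendsto (fun n => 2/(lpar ε n : ℝ)) Filter.atTop (nhds 0) :=
      Filter.Tendsto.div_atTop tendsto_const_nhds (tendsto_natCast_atTop_atTop.comp hl_inf)
    refine Filter.Tendsto.congr' ?_ h2l0
    filter_upwards [hgoodev] with n hgn
    rw [lam2par, if_pos hgn]
end

section
/- Fix an integer q ≥ 2. For every sequence of positive reals R_i → ∞ and every sequence of (n_i, M_i) ID codes for the q-ary uniform permutation channel with n_i → ∞ and M_i ≥ 2^{R_i · n_i^{q−1}}, the error probabilities satisfy liminf_{i→∞} (λ_{1,i} + λ_{2,i}) ≥ 1. -/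
open Finset

/-- Type-I error `λ_1 = max_i λ_{i↛i}` of an ID code, expressed as a supremum. -/
noncomputable def lamI (q n : ℕ) {M : ℕ} (Q : Fin M → (Fin n → Fin q) → ℝ)
    (D : Fin M → Finset (Fin n → Fin q)) : ℝ :=
  ⨆ i, lamMD q n Q D i

/-- Type-II error `λ_2 = max_{i≠j} λ_{i→j}` of an ID code, expressed as a supremum. -/
noncomputable def lamII (q n : ℕ) {M : ℕ} (Q : Fin M → (Fin n → Fin q) → ℝ)
    (D : Fin M → Finset (Fin n → Fin q)) : ℝ :=
  ⨆ i, ⨆ j, ⨆ (_ : i ≠ j), lamFA q n Q D i j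

namespace OneShotAux

variable {q n : ℕ}

def cnt (x : Fin n → Fin q) (k : Fin q) : ℕ := (Finset.univ.filter fun t => x t = k).card

lemma cnt_le (x : Fin n → Fin q) (k : Fin q) : cnt x k ≤ n := by
  classical
  simpa [cnt] using (Finset.card_filter_le Finset.univ fun t => x t = k)

lemma sum_cnt (x : Fin n → Fin q) : ∑ k, cnt x k = n := by
  classical
  have h := Finset.card_eq_sum_card_fiberwise (f := x) (s := Finset.univ)
    (t := Finset.univ) (fun a _ => Finset.mem_univ _)
  simpa [cnt] using h.symm

def cntR (x : Fin n → Fin q) : Fin (q-1) → Fin (n+1) :=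
  fun k => ⟨cnt x (Fin.castLE (Nat.sub_le q 1) k), Nat.lt_succ_of_le (cnt_le x _)⟩

lemma cnt_eq_of_cntR_eq {x y : Fin n → Fin q} (h : cntR x = cntR y) : cnt x = cnt y := by
  classical
  have hlt : ∀ k : Fin q, (k : ℕ) < q - 1 → cnt x k = cnt y k := by
    intro k hk
    have h2 := congrArg Fin.val (congrFun h ⟨(k : ℕ), hk⟩)
    have h3 : Fin.castLE (Nat.sub_le q 1) ⟨(k : ℕ), hk⟩ = k := rfl
    simpa [cntR, h3] using h2
  funext k
  by_cases hk : (k : ℕ) < q - 1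
  · exact hlt k hk
  · have hx := sum_cnt x
    have hy := sum_cnt y
    rw [← Finset.add_sum_erase _ _ (Finset.mem_univ k)] at hx hy
    have hs : ∑ k' ∈ Finset.univ.erase k, cnt x k' = ∑ k' ∈ Finset.univ.erase k, cnt y k' := by
      refine Finset.sum_congr rfl fun k' hk' => ?_
      have h1 : k' ≠ k := (Finset.mem_erase.mp hk').1
      have h2 : (k' : ℕ) ≠ (k : ℕ) := fun hh => h1 (Fin.ext hh)
      have h3 := k'.isLt
      have h4 := k.isLt
      exact hlt k' (by omega)
    omega

lemma exists_perm_of_cnt_eq {x y : Fin n → Fin q} (h : cnt x = cnt y) :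
    ∃ σ : Equiv.Perm (Fin n), y = fun t => x (σ t) := by
  classical
  have hcard : ∀ k : Fin q, Fintype.card {t // y t = k} = Fintype.card {t // x t = k} := by
    intro k
    simp only [Fintype.card_subtype]
    exact (congrFun h k).symm
  let e : ∀ k : Fin q, {t // y t = k} ≃ {t // x t = k} := fun k => Fintype.equivOfCardEq (hcard k)
  refine ⟨(Equiv.sigmaFiberEquiv y).symm.trans ((Equiv.sigmaCongrRight e).trans
    (Equiv.sigmaFiberEquiv x)), ?_⟩
  funext t
  exact ((e (y t) ⟨t, rfl⟩).2).symm

lemma typeClass_eq_of_cntR_eq {x y : Fin n → Fin q} (h : cntR x = cntR y) :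
    typeClass q n x = typeClass q n y := by
  obtain ⟨σ, hσ⟩ := exists_perm_of_cnt_eq (cnt_eq_of_cntR_eq h)
  ext z
  simp only [typeClass, Finset.mem_filter, Finset.mem_univ, true_and]
  constructor
  · rintro ⟨τ, rfl⟩
    exact ⟨τ.trans σ.symm, by funext k; simp [hσ]⟩
  · rintro ⟨τ, rfl⟩
    exact ⟨τ.trans σ, by funext k; simp [hσ]⟩

noncomputable def fRatio (q n : ℕ) (D : Finset (Fin n → Fin q)) (x : Fin n → Fin q) : ℝ :=
  ((typeClass q n x ∩ D).card : ℝ) / ((typeClass q n x).card : ℝ)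

lemma mem_typeClass_self (q n : ℕ) (x : Fin n → Fin q) : x ∈ typeClass q n x := by
  simp only [typeClass, Finset.mem_filter, Finset.mem_univ, true_and]
  exact ⟨Equiv.refl _, rfl⟩

lemma typeClass_card_pos (q n : ℕ) (x : Fin n → Fin q) : 0 < (typeClass q n x).card :=
  Finset.card_pos.mpr ⟨x, mem_typeClass_self q n x⟩

lemma fRatio_nonneg (q n : ℕ) (D : Finset (Fin n → Fin q)) (x : Fin n → Fin q) :
    0 ≤ fRatio q n D x := by
  unfold fRatio; positivity

lemma fRatio_le_one (q n : ℕ) (D : Finset (Fin n → Fin q)) (x : Fin n → Fin q) :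
    fRatio q n D x ≤ 1 := by
  unfold fRatio
  rw [div_le_one (by exact_mod_cast typeClass_card_pos q n x)]
  exact_mod_cast Finset.card_le_card Finset.inter_subset_left

lemma sdRatio_le_one (q n : ℕ) (D : Finset (Fin n → Fin q)) (x : Fin n → Fin q) :
    ((typeClass q n x \ D).card : ℝ) / ((typeClass q n x).card : ℝ) ≤ 1 := by
  rw [div_le_one (by exact_mod_cast typeClass_card_pos q n x)]
  exact_mod_cast Finset.card_le_card (Finset.sdiff_subset)

noncomputable def quant (N : ℕ) (r : ℝ) : Fin (N+1) :=
  ⟨min (Nat.floor (r * N)) N, Nat.lt_succ_of_le (min_le_right _ _)⟩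

lemma quant_close {N : ℕ} (hN : 0 < N) {r s : ℝ} (hr0 : 0 ≤ r) (hr1 : r ≤ 1)
    (hs0 : 0 ≤ s) (hs1 : s ≤ 1) (h : quant N r = quant N s) : |r - s| < 1/N := by
  have hNR : (0:ℝ) < N := by exact_mod_cast hN
  have hfr : Nat.floor (r * N) ≤ N := by
    have h1 : r * N ≤ (N : ℝ) := by nlinarith
    calc Nat.floor (r*N) ≤ Nat.floor ((N:ℝ)) := Nat.floor_le_floor h1
      _ = N := Nat.floor_natCast N
  have hfs : Nat.floor (s * N) ≤ N := by
    have h1 : s * N ≤ (N : ℝ) := by nlinarith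
    calc Nat.floor (s*N) ≤ Nat.floor ((N:ℝ)) := Nat.floor_le_floor h1
      _ = N := Nat.floor_natCast N
  have heq : Nat.floor (r*N) = Nat.floor (s*N) := by
    have h2 := congrArg Fin.val h
    simpa [quant, min_eq_left hfr, min_eq_left hfs] using h2
  have hcast : ((Nat.floor (r*N) : ℝ)) = ((Nat.floor (s*N) : ℝ)) := by exact_mod_cast heq
  have h1 : r*N < Nat.floor (r*N) + 1 := Nat.lt_floor_add_one _
  have h2 : (Nat.floor (s*N) : ℝ) ≤ s*N := Nat.floor_le (by positivity)
  have h3 : s*N < Nat.floor (s*N) + 1 := Nat.lt_floor_add_one _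
  have h4 : (Nat.floor (r*N) : ℝ) ≤ r*N := Nat.floor_le (by positivity)
  have hb1 : r - s < 1/N := by rw [lt_div_iff₀ hNR]; nlinarith
  have hb2 : s - r < 1/N := by rw [lt_div_iff₀ hNR]; nlinarith
  rw [abs_sub_lt_iff]
  exact ⟨hb1, hb2⟩



open Classical in
noncomputable def encode (q n N : ℕ) (D : Finset (Fin n → Fin q)) :
    (Fin (q-1) → Fin (n+1)) → Fin (N+1) :=
  fun c => if h : ∃ x : Fin n → Fin q, cntR x = c then quant N (fRatio q n D h.choose) else 0

set_option maxHeartbeats 1000000 in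
lemma encode_cntR (q n N : ℕ) (D : Finset (Fin n → Fin q)) (x : Fin n → Fin q) :
    encode q n N D (cntR x) = quant N (fRatio q n D x) := by
  have hex : ∃ z : Fin n → Fin q, cntR z = cntR x := ⟨x, rfl⟩
  unfold encode
  rw [dif_pos hex]
  congr 1
  unfold fRatio
  rw [typeClass_eq_of_cntR_eq hex.choose_spec]

lemma lamFA_eq (q n : ℕ) {M : ℕ} (Q : Fin M → (Fin n → Fin q) → ℝ)
    (D : Fin M → Finset (Fin n → Fin q)) (i j : Fin M) :
    lamFA q n Q D i j = ∑ x, Q i x * fRatio q n (D j) x := rfl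

lemma lamMD_add_lamFA (q n : ℕ) {M : ℕ} (Q : Fin M → (Fin n → Fin q) → ℝ)
    (D : Fin M → Finset (Fin n → Fin q)) (i : Fin M) (hQ : IsPMF (Q i)) :
    lamMD q n Q D i + lamFA q n Q D i i = 1 := by
  unfold lamMD lamFA
  rw [← Finset.sum_add_distrib]
  have hterm : ∀ x : Fin n → Fin q,
      Q i x * (((typeClass q n x \ D i).card : ℝ) / ((typeClass q n x).card : ℝ)) +
      Q i x * (((typeClass q n x ∩ D i).card : ℝ) / ((typeClass q n x).card : ℝ)) = Q i x := by
    intro x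
    have hc : (0:ℝ) < ((typeClass q n x).card : ℝ) := by
      exact_mod_cast typeClass_card_pos q n x
    have hab : ((typeClass q n x \ D i).card : ℝ) + ((typeClass q n x ∩ D i).card : ℝ)
        = ((typeClass q n x).card : ℝ) := by
      exact_mod_cast Finset.card_sdiff_add_card_inter (typeClass q n x) (D i)
    rw [← mul_add, ← add_div, hab, div_self hc.ne', mul_one]
  rw [Finset.sum_congr rfl (fun x _ => hterm x)]
  exact hQ.2

lemma lamMD_le_one (q n : ℕ) {M : ℕ} (Q : Fin M → (Fin n → Fin q) → ℝ)
    (D : Fin M → Finset (Fin n → Fin q)) (i : Fin M) (hQ : IsPMF (Q i)) :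
    lamMD q n Q D i ≤ 1 := by
  unfold lamMD
  calc ∑ x, Q i x * (((typeClass q n x \ D i).card : ℝ) / ((typeClass q n x).card : ℝ))
      ≤ ∑ x : Fin n → Fin q, Q i x * 1 := by
        refine Finset.sum_le_sum fun x _ => ?_
        exact mul_le_mul_of_nonneg_left (sdRatio_le_one q n (D i) x) (hQ.1 x)
    _ = 1 := by simpa using hQ.2

lemma lamFA_le_one (q n : ℕ) {M : ℕ} (Q : Fin M → (Fin n → Fin q) → ℝ)
    (D : Fin M → Finset (Fin n → Fin q)) (i j : Fin M) (hQ : IsPMF (Q i)) :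
    lamFA q n Q D i j ≤ 1 := by
  rw [lamFA_eq]
  calc ∑ x, Q i x * fRatio q n (D j) x
      ≤ ∑ x : Fin n → Fin q, Q i x * 1 := by
        refine Finset.sum_le_sum fun x _ => ?_
        exact mul_le_mul_of_nonneg_left (fRatio_le_one q n (D j) x) (hQ.1 x)
    _ = 1 := by simpa using hQ.2

lemma cast_pow_eq_rpow (K e : ℕ) (hK : 0 < K) :
    ((K ^ e : ℕ) : ℝ) = (2:ℝ) ^ ((e : ℝ) * Real.logb 2 (K : ℝ)) := by
  rw [mul_comm, Real.rpow_mul (by norm_num),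
    Real.rpow_logb (by norm_num) (by norm_num) (by exact_mod_cast hK), Real.rpow_natCast,
    Nat.cast_pow]

end OneShotAux

set_option maxHeartbeats 2000000 in
/-- Strong converse (one-shot): for any `R_i → ∞` and any sequence of `(n_i, M_i)` ID codes
for the `q`-ary uniform permutation channel with `n_i → ∞` and `M_i ≥ 2^(R_i·n_i^(q-1))`,
`liminf_i (λ_{1,i} + λ_{2,i}) ≥ 1`. -/
theorem oneShotStrongConverse (q : ℕ) (hq : 2 ≤ q)
    (R : ℕ → ℝ) (hRpos : ∀ i, 0 < R i)
    (hR : Filter.Tendsto R Filter.atTop Filter.atTop)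
    (n : ℕ → ℕ) (hn : Filter.Tendsto n Filter.atTop Filter.atTop)
    (M : ℕ → ℕ)
    (Q : ∀ i, Fin (M i) → (Fin (n i) → Fin q) → ℝ)
    (D : ∀ i, Fin (M i) → Finset (Fin (n i) → Fin q))
    (hQ : ∀ i j, IsPMF (Q i j))
    (hM : ∀ i, (2 : ℝ) ^ (R i * (n i : ℝ) ^ (q - 1)) ≤ (M i : ℝ)) :
    1 ≤ Filter.liminf
      (fun i => lamI q (n i) (Q i) (D i) + lamII q (n i) (Q i) (D i)) Filter.atTop := by
  classical
  open OneShotAux in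
  have hbound : ∀ m, lamI q (n m) (Q m) (D m) + lamII q (n m) (Q m) (D m) ≤ 2 := by
    intro m
    have h1 : lamI q (n m) (Q m) (D m) ≤ 1 :=
      Real.iSup_le (fun j => lamMD_le_one q (n m) (Q m) (D m) j (hQ m j)) zero_le_one
    have h2 : lamII q (n m) (Q m) (D m) ≤ 1 :=
      Real.iSup_le (fun i => Real.iSup_le (fun j => Real.iSup_le
        (fun _ => lamFA_le_one q (n m) (Q m) (D m) i j (hQ m i)) zero_le_one) zero_le_one)
        zero_le_one
    linarith
  have hcb : Filter.IsCoboundedUnder (· ≥ ·) Filter.atTop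
      (fun m => lamI q (n m) (Q m) (D m) + lamII q (n m) (Q m) (D m)) :=
    (Filter.isBoundedUnder_of ⟨2, hbound⟩).isCoboundedUnder_ge
  have key : ∀ ε : ℝ, 0 < ε → ∀ᶠ m in Filter.atTop,
      1 - ε ≤ lamI q (n m) (Q m) (D m) + lamII q (n m) (Q m) (D m) := by
    intro ε hε
    set N : ℕ := ⌈1/ε⌉₊ + 1 with hNdef
    have hNpos : 0 < N := Nat.succ_pos _
    have hNR : (0:ℝ) < N := by exact_mod_cast hNpos
    have hNε : (1:ℝ)/N < ε := by
      rw [div_lt_iff₀ hNR]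
      have h1 : (1:ℝ)/ε ≤ (⌈1/ε⌉₊ : ℝ) := Nat.le_ceil _
      have h2 : (1:ℝ)/ε < (N : ℝ) := by
        rw [hNdef]; push_cast; linarith
      calc (1:ℝ) = ε * (1/ε) := by field_simp
        _ < ε * N := by exact mul_lt_mul_of_pos_left h2 hε
    set C : ℝ := 2^(q-1) * Real.logb 2 ((N+1 : ℕ) : ℝ) with hCdef
    have hL0 : 0 ≤ Real.logb 2 ((N+1 : ℕ) : ℝ) :=
      Real.logb_nonneg one_lt_two (by exact_mod_cast Nat.one_le_iff_ne_zero.mpr (Nat.succ_ne_zero N))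
    filter_upwards [hR.eventually_gt_atTop C, hn.eventually_ge_atTop 1] with m hRm hnm
    by_contra hlt
    push_neg at hlt
    -- injectivity of the quantized encoding
    have hinj : Function.Injective (fun j : Fin (M m) => encode q (n m) N (D m j)) := by
      intro i j hij
      by_contra hne
      have hpt : ∀ x : Fin (n m) → Fin q,
          quant N (fRatio q (n m) (D m i) x) = quant N (fRatio q (n m) (D m j) x) := by
        intro x
        have h : encode q (n m) N (D m i) (cntR x) = encode q (n m) N (D m j) (cntR x) :=
          congrFun hij (cntR x)
        rwa [encode_cntR, encode_cntR] at h
      have hMDle : lamMD q (n m) (Q m) (D m) i ≤ lamI q (n m) (Q m) (D m) :=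
        le_ciSup (Set.Finite.bddAbove (Set.finite_range _)) i
      have hFAle : lamFA q (n m) (Q m) (D m) i j ≤ lamII q (n m) (Q m) (D m) := by
        have b1 : lamFA q (n m) (Q m) (D m) i j
            ≤ ⨆ (_ : i ≠ j), lamFA q (n m) (Q m) (D m) i j :=
          le_ciSup (f := fun _ : i ≠ j => lamFA q (n m) (Q m) (D m) i j)
            (Set.Finite.bddAbove (Set.finite_range _)) hne
        have b2 : (⨆ (_ : i ≠ j), lamFA q (n m) (Q m) (D m) i j)
            ≤ ⨆ j', ⨆ (_ : i ≠ j'), lamFA q (n m) (Q m) (D m) i j' :=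
          le_ciSup (f := fun j' => ⨆ (_ : i ≠ j'), lamFA q (n m) (Q m) (D m) i j')
            (Set.Finite.bddAbove (Set.finite_range _)) j
        have b3 : (⨆ j', ⨆ (_ : i ≠ j'), lamFA q (n m) (Q m) (D m) i j')
            ≤ lamII q (n m) (Q m) (D m) :=
          le_ciSup (f := fun i' => ⨆ j', ⨆ (_ : i' ≠ j'), lamFA q (n m) (Q m) (D m) i' j')
            (Set.Finite.bddAbove (Set.finite_range _)) i
        exact b1.trans (b2.trans b3)
      have hid : lamMD q (n m) (Q m) (D m) i + lamFA q (n m) (Q m) (D m) i i = 1 :=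
        lamMD_add_lamFA q (n m) (Q m) (D m) i (hQ m i)
      have hclose : lamFA q (n m) (Q m) (D m) i i - lamFA q (n m) (Q m) (D m) i j ≤ 1/N := by
        rw [lamFA_eq, lamFA_eq, ← Finset.sum_sub_distrib]
        have hstep : ∀ x ∈ (Finset.univ : Finset (Fin (n m) → Fin q)),
            Q m i x * fRatio q (n m) (D m i) x - Q m i x * fRatio q (n m) (D m j) x
              ≤ Q m i x * (1/N) := by
          intro x _
          have h1 := quant_close hNpos (fRatio_nonneg q (n m) (D m i) x)
            (fRatio_le_one q (n m) (D m i) x) (fRatio_nonneg q (n m) (D m j) x)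
            (fRatio_le_one q (n m) (D m j) x) (hpt x)
          have h2 := (abs_lt.mp h1).2
          have h3 := (hQ m i).1 x
          nlinarith
        calc ∑ x, (Q m i x * fRatio q (n m) (D m i) x - Q m i x * fRatio q (n m) (D m j) x)
            ≤ ∑ x : Fin (n m) → Fin q, Q m i x * (1/N) := Finset.sum_le_sum hstep
          _ = 1 * (1/N) := by rw [← Finset.sum_mul, (hQ m i).2]
          _ = 1/N := one_mul _
      linarith
    -- counting bound
    have hcard : M m ≤ (N+1) ^ ((n m + 1)^(q-1)) := by
      have h := Fintype.card_le_of_injective _ hinj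
      simpa [Fintype.card_fun] using h
    have hMr : (2:ℝ) ^ (R m * (n m : ℝ)^(q-1))
        ≤ (((N+1) ^ ((n m + 1)^(q-1)) : ℕ) : ℝ) :=
      (hM m).trans (by exact_mod_cast Nat.cast_le.mpr hcard)
    rw [cast_pow_eq_rpow (N+1) ((n m + 1)^(q-1)) (Nat.succ_pos N)] at hMr
    have hexp : R m * (n m : ℝ)^(q-1)
        ≤ (((n m + 1)^(q-1) : ℕ) : ℝ) * Real.logb 2 ((N+1 : ℕ) : ℝ) :=
      (Real.rpow_le_rpow_left_iff (by norm_num : (1:ℝ) < 2)).mp hMr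
    have h1n : (1:ℝ) ≤ (n m : ℝ) := by exact_mod_cast hnm
    have hee : (((n m + 1)^(q-1) : ℕ) : ℝ) ≤ 2^(q-1) * (n m : ℝ)^(q-1) := by
      push_cast
      calc ((n m : ℝ)+1)^(q-1) ≤ (2 * (n m : ℝ))^(q-1) :=
            pow_le_pow_left₀ (by linarith) (by linarith) _
        _ = 2^(q-1) * (n m : ℝ)^(q-1) := mul_pow 2 _ _
    have hP : (1:ℝ) ≤ (n m : ℝ)^(q-1) := one_le_pow₀ h1n
    have hRC : R m ≤ C := by
      have h2 : R m * (n m : ℝ)^(q-1) ≤ C * (n m : ℝ)^(q-1) := by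
        calc R m * (n m : ℝ)^(q-1)
            ≤ (((n m + 1)^(q-1) : ℕ) : ℝ) * Real.logb 2 ((N+1 : ℕ) : ℝ) := hexp
          _ ≤ (2^(q-1) * (n m : ℝ)^(q-1)) * Real.logb 2 ((N+1 : ℕ) : ℝ) :=
              mul_le_mul_of_nonneg_right hee hL0
          _ = C * (n m : ℝ)^(q-1) := by rw [hCdef]; ring
      exact le_of_mul_le_mul_right h2 (by linarith)
    linarith
  have hlim : ∀ ε : ℝ, 0 < ε → 1 - ε ≤ Filter.liminf
      (fun i => lamI q (n i) (Q i) (D i) + lamII q (n i) (Q i) (D i)) Filter.atTop :=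
    fun ε hε => Filter.le_liminf_of_le hcb (key ε hε)
  by_contra hcon
  push_neg at hcon
  have h := hlim ((1 - Filter.liminf
      (fun i => lamI q (n i) (Q i) (D i) + lamII q (n i) (Q i) (D i)) Filter.atTop)/2)
    (by linarith)
  linarith
end

section
/- Fix an integer q ≥ 2 and a real β > 0. For every sequence of positive reals R_i → ∞ and every sequence of (n_i, l_i, M_i) ID codes for the q-ary uniform permutation channel with n_i → ∞, l_i ≤ β·n_i for all i, and M_i ≥ 2^{R_i · n_i^{l_i(q−1)}}, the error probabilities satisfy liminf_{i→∞} (λ_{1,i} + λ_{2,i}) ≥ 1. -/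
open Finset

/-- Type class of an `l`-tuple of blocks: the product of the blockwise type classes. -/
def typeClassL (q n l : ℕ) (x : Fin l → Fin n → Fin q) : Finset (Fin l → Fin n → Fin q) :=
  Finset.univ.filter fun y => ∀ s, y s ∈ typeClass q n (x s)

/-- False-acceptance probability `λ_{i→j}` of an `(n, l, M)` (multishot) ID code for the
`q`-ary uniform permutation channel. -/
noncomputable def lamFAL (q n l : ℕ) {M : ℕ} (Q : Fin M → (Fin l → Fin n → Fin q) → ℝ)
    (D : Fin M → Finset (Fin l → Fin n → Fin q)) (i j : Fin M) : ℝ :=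
  ∑ x, Q i x * (((typeClassL q n l x ∩ D j).card : ℝ) / ((typeClassL q n l x).card : ℝ))

/-- Missed-detection probability `λ_{i↛i}` of an `(n, l, M)` (multishot) ID code for the
`q`-ary uniform permutation channel. -/
noncomputable def lamMDL (q n l : ℕ) {M : ℕ} (Q : Fin M → (Fin l → Fin n → Fin q) → ℝ)
    (D : Fin M → Finset (Fin l → Fin n → Fin q)) (i : Fin M) : ℝ :=
  ∑ x, Q i x * (((typeClassL q n l x \ D i).card : ℝ) / ((typeClassL q n l x).card : ℝ))

/-- Type-I error `λ_1 = max_i λ_{i↛i}` of a multishot ID code, expressed as a supremum. -/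
noncomputable def lamIL (q n l : ℕ) {M : ℕ} (Q : Fin M → (Fin l → Fin n → Fin q) → ℝ)
    (D : Fin M → Finset (Fin l → Fin n → Fin q)) : ℝ :=
  ⨆ i, lamMDL q n l Q D i

/-- Type-II error `λ_2 = max_{i≠j} λ_{i→j}` of a multishot ID code, expressed as a
supremum. -/
noncomputable def lamIIL (q n l : ℕ) {M : ℕ} (Q : Fin M → (Fin l → Fin n → Fin q) → ℝ)
    (D : Fin M → Finset (Fin l → Fin n → Fin q)) : ℝ :=
  ⨆ i, ⨆ j, ⨆ (_ : i ≠ j), lamFAL q n l Q D i j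

namespace MSSC
variable {q n : ℕ}

def cnt (x : Fin n → Fin q) (v : Fin q) : ℕ := (univ.filter fun k => x k = v).card

lemma cnt_le (x : Fin n → Fin q) (v : Fin q) : cnt x v ≤ n := by
  simpa [cnt] using (Finset.card_filter_le univ (fun k => x k = v))

lemma cnt_eq_card (x : Fin n → Fin q) (v : Fin q) : cnt x v = Fintype.card {k // x k = v} := by
  simp [cnt, Fintype.card_subtype]

lemma exists_perm_iff (x y : Fin n → Fin q) :
    (∃ σ : Equiv.Perm (Fin n), y = fun k => x (σ k)) ↔ ∀ v, cnt x v = cnt y v := by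
  constructor
  · rintro ⟨σ, rfl⟩ v
    rw [cnt_eq_card, cnt_eq_card]
    exact (Fintype.card_congr (σ.subtypeEquiv (fun k => Iff.rfl))).symm
  · intro h
    have e : ∀ v, {k // y k = v} ≃ {k // x k = v} := fun v =>
      Fintype.equivOfCardEq (by rw [← cnt_eq_card, ← cnt_eq_card, h v])
    refine ⟨(Equiv.sigmaFiberEquiv y).symm.trans
      ((Equiv.sigmaCongrRight e).trans (Equiv.sigmaFiberEquiv x)), ?_⟩
    funext k
    exact ((e (y k) ⟨k, rfl⟩).prop).symm

lemma mem_typeClass_iff (x y : Fin n → Fin q) :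
    y ∈ typeClass q n x ↔ ∀ v, cnt x v = cnt y v := by
  simp only [typeClass, mem_filter, mem_univ, true_and]
  exact exists_perm_iff x y

lemma sum_cnt (x : Fin n → Fin q) : ∑ v, cnt x v = n := by
  have := Finset.card_eq_sum_card_fiberwise (f := x) (s := univ) (t := univ)
    (fun k _ => mem_univ (x k))
  simpa [cnt] using this.symm

end MSSC
namespace MSSC

lemma cnt_all_eq {p n : ℕ} (x y : Fin n → Fin (p+1))
    (h : ∀ a : Fin p, cnt x a.castSucc = cnt y a.castSucc) : ∀ v, cnt x v = cnt y v := by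
  have hx := sum_cnt x
  have hy := sum_cnt y
  rw [Fin.sum_univ_castSucc] at hx hy
  have hs : ∑ a : Fin p, cnt x a.castSucc = ∑ a : Fin p, cnt y a.castSucc :=
    Finset.sum_congr rfl (fun a _ => h a)
  intro v
  induction v using Fin.lastCases with
  | last => omega
  | cast a => exact h a

def tmap (p n l : ℕ) (x : Fin l → Fin n → Fin (p+1)) : Fin l → Fin p → Fin (n+1) :=
  fun s a => ⟨cnt (x s) a.castSucc, Nat.lt_succ_of_le (cnt_le _ _)⟩

lemma typeClassL_eq {p n l : ℕ} {x y : Fin l → Fin n → Fin (p+1)}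
    (h : tmap p n l x = tmap p n l y) :
    typeClassL (p+1) n l x = typeClassL (p+1) n l y := by
  have hc : ∀ s v, cnt (x s) v = cnt (y s) v := by
    intro s
    apply cnt_all_eq
    intro a
    have := congrFun (congrFun h s) a
    simpa [tmap, Fin.ext_iff] using this
  ext z
  simp only [typeClassL, mem_filter, mem_univ, true_and, mem_typeClass_iff]
  constructor <;> intro hz s v
  · rw [← hc s v]; exact hz s v
  · rw [hc s v]; exact hz s v

lemma mem_self {q n : ℕ} (x : Fin n → Fin q) : x ∈ typeClass q n x := by
  simp only [typeClass, mem_filter, mem_univ, true_and]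
  exact ⟨Equiv.refl _, rfl⟩

lemma memL_self {q n l : ℕ} (x : Fin l → Fin n → Fin q) : x ∈ typeClassL q n l x := by
  simp only [typeClassL, mem_filter, mem_univ, true_and]
  exact fun s => mem_self (x s)

lemma cardL_pos {q n l : ℕ} (x : Fin l → Fin n → Fin q) : 0 < (typeClassL q n l x).card :=
  Finset.card_pos.mpr ⟨x, memL_self x⟩

noncomputable def frac (q n l : ℕ) (D : Finset (Fin l → Fin n → Fin q))
    (x : Fin l → Fin n → Fin q) : ℝ :=
  ((typeClassL q n l x ∩ D).card : ℝ) / ((typeClassL q n l x).card : ℝ)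

lemma frac_nonneg (q n l : ℕ) (D : Finset (Fin l → Fin n → Fin q)) (x) :
    0 ≤ frac q n l D x := by
  unfold frac; positivity

lemma frac_le_one (q n l : ℕ) (D : Finset (Fin l → Fin n → Fin q)) (x) :
    frac q n l D x ≤ 1 := by
  unfold frac
  apply div_le_one_of_le₀
  · exact_mod_cast Finset.card_le_card (Finset.inter_subset_left)
  · positivity

lemma sdiff_div {q n l : ℕ} (D : Finset (Fin l → Fin n → Fin q)) (x) :
    ((typeClassL q n l x \ D).card : ℝ) / ((typeClassL q n l x).card : ℝ)
      = 1 - frac q n l D x := by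
  have h := Finset.card_sdiff_add_card_inter (typeClassL q n l x) D
  have hpos : (0:ℝ) < ((typeClassL q n l x).card : ℝ) := by exact_mod_cast cardL_pos x
  unfold frac
  field_simp
  push_cast [← h]
  ring

end MSSC
namespace MSSC

lemma core (p n l M K : ℕ) (hK : 0 < K)
    (Q : Fin M → (Fin l → Fin n → Fin (p+1)) → ℝ)
    (D : Fin M → Finset (Fin l → Fin n → Fin (p+1)))
    (hQ : ∀ j, IsPMF (Q j))
    (hM : (K+1)^((n+1)^(l*p)) < M) :
    1 - 1/(K:ℝ) ≤ lamIL (p+1) n l Q D + lamIIL (p+1) n l Q D := by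
  classical
  haveI : Nonempty (Fin l → Fin n → Fin (p+1)) := ⟨fun _ _ => 0⟩
  have hKR : (0:ℝ) < K := by exact_mod_cast hK
  set f : Fin M → (Fin l → Fin n → Fin (p+1)) → ℝ := fun j x => frac (p+1) n l (D j) x with hf
  have hfle : ∀ j x, (K:ℝ) * f j x ≤ K := fun j x => by
    have := frac_le_one (p+1) n l (D j) x
    nlinarith
  have hfnn : ∀ j x, 0 ≤ (K:ℝ) * f j x := fun j x => by
    have := frac_nonneg (p+1) n l (D j) x
    positivity
  set g : Fin M → (Fin l → Fin n → Fin (p+1)) → Fin (K+1) := fun j x =>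
    ⟨Nat.floor ((K:ℝ) * f j x), by
      rw [Nat.lt_succ_iff]
      calc Nat.floor ((K:ℝ) * f j x) ≤ Nat.floor ((K:ℝ)) := Nat.floor_le_floor (hfle j x)
        _ = K := Nat.floor_natCast K⟩ with hg
  set sec : (Fin l → Fin p → Fin (n+1)) → (Fin l → Fin n → Fin (p+1)) :=
    Function.invFun (tmap p n l) with hsec
  set φ : Fin M → ((Fin l → Fin p → Fin (n+1)) → Fin (K+1)) := fun j θ => g j (sec θ) with hφ
  have hcard : Fintype.card ((Fin l → Fin p → Fin (n+1)) → Fin (K+1)) < Fintype.card (Fin M) := by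
    have hc : Fintype.card ((Fin l → Fin p → Fin (n+1)) → Fin (K+1)) = (K+1)^((n+1)^(l*p)) := by
      simp [Fintype.card_fun, ← pow_mul, mul_comm p l]
    rw [hc, Fintype.card_fin]
    exact hM
  obtain ⟨i, j, hij, hphi⟩ := Fintype.exists_ne_map_eq_of_card_lt φ hcard
  have hK1 : (K:ℝ) * ((1:ℝ)/K) = 1 := by field_simp
  have hclose : ∀ x, |f i x - f j x| ≤ 1/(K:ℝ) := by
    intro x
    set x' := sec (tmap p n l x) with hx'
    have hτ : tmap p n l x' = tmap p n l x := Function.invFun_eq ⟨x, rfl⟩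
    have hT := typeClassL_eq hτ
    have hfeq : ∀ m : Fin M, f m x' = f m x := by
      intro m; simp only [hf, frac, hT]
    have hgeq : g i x' = g j x' := congrFun hphi (tmap p n l x)
    have hfl : Nat.floor ((K:ℝ) * f i x') = Nat.floor ((K:ℝ) * f j x') := by
      have := congrArg Fin.val hgeq
      simpa [hg] using this
    have h1 := Nat.floor_le (hfnn i x')
    have h2 := Nat.lt_floor_add_one ((K:ℝ) * f i x')
    have h3 := Nat.floor_le (hfnn j x')
    have h4 := Nat.lt_floor_add_one ((K:ℝ) * f j x')
    rw [hfl] at h1 h2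
    rw [← hfeq i, ← hfeq j, abs_sub_le_iff]
    constructor <;> nlinarith [hK1]
  have key : 1 - 1/(K:ℝ) ≤ lamMDL (p+1) n l Q D i + lamFAL (p+1) n l Q D i j := by
    unfold lamMDL lamFAL
    rw [← Finset.sum_add_distrib]
    have hterm : ∀ x : Fin l → Fin n → Fin (p+1),
        Q i x * (1 - 1/(K:ℝ)) ≤
        Q i x * (((typeClassL (p+1) n l x \ D i).card : ℝ) / ((typeClassL (p+1) n l x).card : ℝ))
          + Q i x * (((typeClassL (p+1) n l x ∩ D j).card : ℝ) / ((typeClassL (p+1) n l x).card : ℝ)) := by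
      intro x
      rw [sdiff_div, ← mul_add]
      apply mul_le_mul_of_nonneg_left _ ((hQ i).1 x)
      have h7 : f i x - f j x ≤ 1/(K:ℝ) := (abs_le.mp (hclose x)).2
      show (1:ℝ) - 1/(K:ℝ) ≤ 1 - f i x + f j x
      linarith
    calc (1:ℝ) - 1/(K:ℝ) = ∑ x, Q i x * (1 - 1/(K:ℝ)) := by
          rw [← Finset.sum_mul, (hQ i).2, one_mul]
      _ ≤ _ := Finset.sum_le_sum (fun x _ => hterm x)
  have hIL : lamMDL (p+1) n l Q D i ≤ lamIL (p+1) n l Q D :=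
    le_ciSup (Set.Finite.bddAbove (Set.finite_range _)) i
  have hIIL : lamFAL (p+1) n l Q D i j ≤ lamIIL (p+1) n l Q D := by
    unfold lamIIL
    have e1 : (⨆ (_ : i ≠ j), lamFAL (p+1) n l Q D i j) = lamFAL (p+1) n l Q D i j :=
      ciSup_pos (p := i ≠ j) (f := fun _ => lamFAL (p+1) n l Q D i j) hij
    rw [← e1]
    calc (⨆ (_ : i ≠ j), lamFAL (p+1) n l Q D i j)
        ≤ ⨆ j', ⨆ (_ : i ≠ j'), lamFAL (p+1) n l Q D i j' :=
          le_ciSup (f := fun j' => ⨆ (_ : i ≠ j'), lamFAL (p+1) n l Q D i j') (Set.Finite.bddAbove (Set.finite_range _)) j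
      _ ≤ _ := le_ciSup (f := fun i' => ⨆ j', ⨆ (_ : i' ≠ j'), lamFAL (p+1) n l Q D i' j') (Set.Finite.bddAbove (Set.finite_range _)) i
  linarith

end MSSC
namespace MSSC

lemma lamMDL_le_one {q n l M : ℕ} (Q : Fin M → (Fin l → Fin n → Fin q) → ℝ)
    (D : Fin M → Finset (Fin l → Fin n → Fin q)) (hQ : ∀ j, IsPMF (Q j)) (i : Fin M) :
    lamMDL q n l Q D i ≤ 1 := by
  unfold lamMDL
  calc ∑ x, Q i x * (((typeClassL q n l x \ D i).card : ℝ) / ((typeClassL q n l x).card : ℝ))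
      ≤ ∑ x, Q i x * 1 := by
        apply Finset.sum_le_sum
        intro x _
        apply mul_le_mul_of_nonneg_left _ ((hQ i).1 x)
        apply div_le_one_of_le₀
        · exact_mod_cast Finset.card_le_card (Finset.sdiff_subset)
        · positivity
    _ = 1 := by simp [(hQ i).2]

lemma lamFAL_le_one {q n l M : ℕ} (Q : Fin M → (Fin l → Fin n → Fin q) → ℝ)
    (D : Fin M → Finset (Fin l → Fin n → Fin q)) (hQ : ∀ j, IsPMF (Q j)) (i j : Fin M) :
    lamFAL q n l Q D i j ≤ 1 := by
  unfold lamFAL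
  calc ∑ x, Q i x * (((typeClassL q n l x ∩ D j).card : ℝ) / ((typeClassL q n l x).card : ℝ))
      ≤ ∑ x, Q i x * 1 := by
        apply Finset.sum_le_sum
        intro x _
        apply mul_le_mul_of_nonneg_left _ ((hQ i).1 x)
        apply div_le_one_of_le₀
        · exact_mod_cast Finset.card_le_card (Finset.inter_subset_left)
        · positivity
    _ = 1 := by simp [(hQ i).2]

lemma lamIL_le_one {q n l M : ℕ} (Q : Fin M → (Fin l → Fin n → Fin q) → ℝ)
    (D : Fin M → Finset (Fin l → Fin n → Fin q)) (hQ : ∀ j, IsPMF (Q j)) :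
    lamIL q n l Q D ≤ 1 :=
  Real.iSup_le (fun i => lamMDL_le_one Q D hQ i) zero_le_one

lemma lamIIL_le_one {q n l M : ℕ} (Q : Fin M → (Fin l → Fin n → Fin q) → ℝ)
    (D : Fin M → Finset (Fin l → Fin n → Fin q)) (hQ : ∀ j, IsPMF (Q j)) :
    lamIIL q n l Q D ≤ 1 :=
  Real.iSup_le (fun i => Real.iSup_le (fun j =>
    Real.iSup_le (fun _ => lamFAL_le_one Q D hQ i j) zero_le_one) zero_le_one) zero_le_one

end MSSC
/-- Strong converse (multishot): for `β > 0`, `R_i → ∞`, and any sequence of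
`(n_i, l_i, M_i)` ID codes for the `q`-ary uniform permutation channel with `n_i → ∞`,
`l_i ≤ β·n_i`, and `M_i ≥ 2^(R_i · n_i^(l_i(q-1)))`, one has
`liminf_i (λ_{1,i} + λ_{2,i}) ≥ 1`. -/
theorem multiShotStrongConverse (q : ℕ) (hq : 2 ≤ q) (β : ℝ) (hβ : 0 < β)
    (R : ℕ → ℝ) (hRpos : ∀ i, 0 < R i)
    (hR : Filter.Tendsto R Filter.atTop Filter.atTop)
    (n : ℕ → ℕ) (hn : Filter.Tendsto n Filter.atTop Filter.atTop)
    (l : ℕ → ℕ) (hlpos : ∀ i, 0 < l i)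
    (hl : ∀ i, (l i : ℝ) ≤ β * (n i : ℝ))
    (M : ℕ → ℕ)
    (Q : ∀ i, Fin (M i) → (Fin (l i) → Fin (n i) → Fin q) → ℝ)
    (D : ∀ i, Fin (M i) → Finset (Fin (l i) → Fin (n i) → Fin q))
    (hQ : ∀ i j, IsPMF (Q i j))
    (hM : ∀ i, (2 : ℝ) ^ (R i * (n i : ℝ) ^ (l i * (q - 1))) ≤ (M i : ℝ)) :
    1 ≤ Filter.liminf
      (fun i => lamIL q (n i) (l i) (Q i) (D i) + lamIIL q (n i) (l i) (Q i) (D i))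
      Filter.atTop := by
  obtain ⟨p, rfl⟩ : ∃ p, q = p + 1 := ⟨q - 1, by omega⟩
  have hub : ∀ i, lamIL (p+1) (n i) (l i) (Q i) (D i) + lamIIL (p+1) (n i) (l i) (Q i) (D i) ≤ 2 :=
    fun i => by
      have h1 := MSSC.lamIL_le_one (Q i) (D i) (hQ i)
      have h2 := MSSC.lamIIL_le_one (Q i) (D i) (hQ i)
      linarith
  have hcob : Filter.IsCoboundedUnder (· ≥ ·) Filter.atTop
      (fun i => lamIL (p+1) (n i) (l i) (Q i) (D i) + lamIIL (p+1) (n i) (l i) (Q i) (D i)) :=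
    Filter.isCoboundedUnder_ge_of_le _ hub
  refine le_of_forall_pos_le_add ?_
  intro ε hε
  obtain ⟨K, hKgt⟩ := exists_nat_gt (1/ε)
  have hKpos : 0 < K := by
    have : (0:ℝ) < 1/ε := by positivity
    exact_mod_cast this.trans hKgt
  have hKR : (0:ℝ) < K := by exact_mod_cast hKpos
  have hKε : 1/(K:ℝ) < ε := by
    rw [div_lt_iff₀ hKR]
    rw [div_lt_iff₀ hε] at hKgt
    linarith
  set C : ℝ := Real.exp (β * p) * Real.logb 2 ((K:ℝ)+1) + 1 with hC
  have hev : ∀ᶠ i in Filter.atTop,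
      1 - 1/(K:ℝ) ≤ lamIL (p+1) (n i) (l i) (Q i) (D i) + lamIIL (p+1) (n i) (l i) (Q i) (D i) := by
    filter_upwards [hn.eventually_ge_atTop 1, hR.eventually_ge_atTop C] with i hn1 hR1
    apply MSSC.core p (n i) (l i) (M i) K hKpos (Q i) (D i) (hQ i)
    -- counting bound
    have h2M := hM i
    simp only [Nat.add_sub_cancel] at h2M
    have hnR : (1:ℝ) ≤ (n i : ℝ) := by exact_mod_cast hn1
    have hnpos : (0:ℝ) < (n i : ℝ) := lt_of_lt_of_le one_pos hnR
    have hlgb : 0 ≤ Real.logb 2 ((K:ℝ)+1) := Real.logb_nonneg one_lt_two (by linarith)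
    have hpow : ((n i:ℝ)+1)^(l i * p) ≤ (n i:ℝ)^(l i * p) * Real.exp (β * p) := by
      have e1 : (n i:ℝ)+1 = (n i:ℝ) * (1 + 1/(n i:ℝ)) := by field_simp
      rw [e1, mul_pow]
      apply mul_le_mul_of_nonneg_left _ (by positivity : (0:ℝ) ≤ (n i:ℝ)^(l i * p))
      calc (1 + 1/(n i:ℝ))^(l i * p) ≤ (Real.exp (1/(n i:ℝ)))^(l i * p) := by
            apply pow_le_pow_left₀ (by positivity)
            have := Real.add_one_le_exp (1/(n i:ℝ))
            linarith
        _ = Real.exp (((l i * p : ℕ):ℝ) * (1/(n i:ℝ))) := by rw [Real.exp_nat_mul]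
        _ ≤ Real.exp (β * p) := by
            apply Real.exp_le_exp.mpr
            rw [mul_one_div, div_le_iff₀ hnpos]
            push_cast
            nlinarith [hl i, hβ.le, (by positivity : (0:ℝ) ≤ (p:ℝ))]
    have h4 : (1:ℝ) ≤ (n i:ℝ)^(l i * p) := one_le_pow₀ hnR
    have h5 : Real.exp (β * p) * Real.logb 2 ((K:ℝ)+1) < R i := by
      have := hR1
      rw [hC] at this
      linarith
    have hexp : (((n i + 1)^(l i * p) : ℕ):ℝ) * Real.logb 2 ((K:ℝ)+1)
        < R i * (n i:ℝ)^(l i * p) := by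
      have hc : (((n i + 1)^(l i * p) : ℕ):ℝ) = ((n i:ℝ)+1)^(l i * p) := by push_cast; ring
      rw [hc]
      calc ((n i:ℝ)+1)^(l i * p) * Real.logb 2 ((K:ℝ)+1)
          ≤ ((n i:ℝ)^(l i * p) * Real.exp (β * p)) * Real.logb 2 ((K:ℝ)+1) :=
            mul_le_mul_of_nonneg_right hpow hlgb
        _ = (n i:ℝ)^(l i * p) * (Real.exp (β * p) * Real.logb 2 ((K:ℝ)+1)) := by ring
        _ < (n i:ℝ)^(l i * p) * R i := by
            apply mul_lt_mul_of_pos_left h5 (lt_of_lt_of_le one_pos h4)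
        _ = R i * (n i:ℝ)^(l i * p) := by ring
    have hKA : ((K:ℝ)+1)^((n i + 1)^(l i * p)) < (2:ℝ) ^ (R i * (n i:ℝ)^(l i * p)) := by
      have hbase : ((K:ℝ)+1) = (2:ℝ) ^ (Real.logb 2 ((K:ℝ)+1)) :=
        (Real.rpow_logb two_pos (by norm_num) (by positivity)).symm
      calc ((K:ℝ)+1)^((n i + 1)^(l i * p))
          = ((2:ℝ) ^ (Real.logb 2 ((K:ℝ)+1)))^((n i + 1)^(l i * p)) := by rw [← hbase]
        _ = (2:ℝ) ^ (Real.logb 2 ((K:ℝ)+1) * (((n i + 1)^(l i * p) : ℕ):ℝ)) := by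
            rw [← Real.rpow_natCast ((2:ℝ) ^ (Real.logb 2 ((K:ℝ)+1))) _, ← Real.rpow_mul (by norm_num)]
        _ < (2:ℝ) ^ (R i * (n i:ℝ)^(l i * p)) := by
            apply (Real.rpow_lt_rpow_left_iff one_lt_two).mpr
            rw [mul_comm]
            exact hexp
    have : (((K+1)^((n i + 1)^(l i * p)) : ℕ) : ℝ) < (M i : ℝ) := by
      push_cast
      exact lt_of_lt_of_le hKA h2M
    exact_mod_cast this
  have hlim : 1 - 1/(K:ℝ) ≤ Filter.liminf
      (fun i => lamIL (p+1) (n i) (l i) (Q i) (D i) + lamIIL (p+1) (n i) (l i) (Q i) (D i))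
      Filter.atTop := Filter.le_liminf_of_le hcob hev
  linarith
end
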